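/- arXiv:1612.08328 — 7 statements merged into one kernel-verified Lean document; each statement's English description precedes it below -/
import Mathlib

section
/- Under the GSVD structure, the orthogonal complement of the kernel of H_ba is the span of columns k−r−s+1, …, k of U_a: (ker H_ba)^⊥ = span{u_{k−r−s+1}, …, u_k}, where u_i denotes the i-th column of U_a. -/
open Matrix

/-- The `N_r × k` GSVD factor `Σ_ba`: row blocks of sizes `N_r−r−s, s, r` and column blocks
of sizes `k−r−s, s, r`; the only nonzero blocks are the `(2,2)` block `diag(b_1,…,b_s)` and
the `(3,3)` block `I_r`.  (Row `i` is paired with column `j` iff `i + k = j + N_r`.) -/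
noncomputable def SigmaBa (Nr k r s : ℕ) (b : ℕ → ℝ) : Matrix (Fin Nr) (Fin k) ℂ :=
  Matrix.of fun i j =>
    if (i : ℕ) + k = (j : ℕ) + Nr ∧ Nr - (r + s) ≤ (i : ℕ) then
      if (i : ℕ) < Nr - r then ((b ((i : ℕ) - (Nr - (r + s))) : ℝ) : ℂ) else 1
    else 0

/-- The `N_e × k` GSVD factor `Σ_ea`: row blocks of sizes `k−r−s, s, N_e−k+r` and column blocks
of sizes `k−r−s, s, r`; the only nonzero blocks are the `(1,1)` block `I_{k−r−s}` and the
`(2,2)` block `diag(e_1,…,e_s)`. -/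
noncomputable def SigmaEa (Ne k r s : ℕ) (e : ℕ → ℝ) : Matrix (Fin Ne) (Fin k) ℂ :=
  Matrix.of fun i j =>
    if (i : ℕ) = (j : ℕ) ∧ (i : ℕ) < k - r then
      if (i : ℕ) < k - (r + s) then 1 else ((e ((i : ℕ) - (k - (r + s))) : ℝ) : ℂ)
    else 0

/-- The `k × N_t` matrix `[Ω^{-1} 0]`, where `Ω = diag(ω_0,…,ω_{k-1})`. -/
noncomputable def OmegaInvZero (k Nt : ℕ) (ω : ℕ → ℂ) : Matrix (Fin k) (Fin Nt) ℂ :=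
  Matrix.of fun i j => if (j : ℕ) = (i : ℕ) then (ω (i : ℕ))⁻¹ else 0

/-- The `N_t × N_t` matrix `A` with `Ω = diag(ω_0,…,ω_{k-1})` in its top-left `k × k` block
and zeros elsewhere. -/
noncomputable def Amat (Nt k : ℕ) (ω : ℕ → ℂ) : Matrix (Fin Nt) (Fin Nt) ℂ :=
  Matrix.of fun i j => if (i : ℕ) = (j : ℕ) ∧ (i : ℕ) < k then ω (i : ℕ) else 0


lemma sigmaBa_mulVec_eq_zero' (Nr k r s : ℕ) (hrsk : r + s ≤ k) (hrsNr : r + s ≤ Nr)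
    (b : ℕ → ℝ) (hb : ∀ p < s, 0 < b p ∧ b p < 1) (z : Fin k → ℂ) :
    SigmaBa Nr k r s b *ᵥ z = 0 ↔ ∀ j : Fin k, k - (r + s) ≤ (j : ℕ) → z j = 0 := by
  constructor
  · intro h j hj
    have hj2 : (j : ℕ) < k := j.2
    have hi : (j : ℕ) + Nr - k < Nr := by omega
    set i : Fin Nr := ⟨(j : ℕ) + Nr - k, hi⟩ with hidef
    have hik : (i : ℕ) + k = (j : ℕ) + Nr := by simp [hidef]; omega
    have hige : Nr - (r + s) ≤ (i : ℕ) := by simp [hidef]; omega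
    have hcomp := congrFun h i
    have hsum : (SigmaBa Nr k r s b *ᵥ z) i = SigmaBa Nr k r s b i j * z j := by
      simp only [Matrix.mulVec, dotProduct]
      refine Finset.sum_eq_single j ?_ (by simp)
      intro j' _ hne
      have : ¬((i : ℕ) + k = (j' : ℕ) + Nr ∧ Nr - (r + s) ≤ (i : ℕ)) := by
        rintro ⟨h1, -⟩
        exact hne (Fin.ext (by omega))
      simp only [SigmaBa, Matrix.of_apply, if_neg this, zero_mul]
    rw [hsum] at hcomp
    rw [Pi.zero_apply] at hcomp
    have hentry : SigmaBa Nr k r s b i j ≠ 0 := by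
      simp only [SigmaBa, Matrix.of_apply, hik, hige, and_self, if_true]
      by_cases hc : (i : ℕ) < Nr - r
      · rw [if_pos hc]
        have hp : (i : ℕ) - (Nr - (r + s)) < s := by omega
        exact_mod_cast ne_of_gt (hb _ hp).1
      · rw [if_neg hc]; exact one_ne_zero
    exact (mul_eq_zero.mp hcomp).resolve_left hentry
  · intro h
    funext i
    simp only [Matrix.mulVec, dotProduct, Pi.zero_apply]
    refine Finset.sum_eq_zero fun j' _ => ?_
    by_cases hc : (i : ℕ) + k = (j' : ℕ) + Nr ∧ Nr - (r + s) ≤ (i : ℕ)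
    · rw [h j' (by omega), mul_zero]
    · simp only [SigmaBa, Matrix.of_apply, if_neg hc, zero_mul]

lemma omegaInvZero_mulVec' (k Nt : ℕ) (hk : k ≤ Nt) (ω : ℕ → ℂ) (y : Fin Nt → ℂ)
    (i : Fin k) :
    (OmegaInvZero k Nt ω *ᵥ y) i = (ω (i : ℕ))⁻¹ * y ⟨(i : ℕ), lt_of_lt_of_le i.2 hk⟩ := by
  simp only [Matrix.mulVec, dotProduct]
  rw [Finset.sum_eq_single (⟨(i : ℕ), lt_of_lt_of_le i.2 hk⟩ : Fin Nt)
      (fun j _ hne => by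
        have hne' : ¬((j : ℕ) = (i : ℕ)) := fun hh => hne (Fin.ext hh)
        simp only [OmegaInvZero, Matrix.of_apply, if_neg hne', zero_mul])
      (by simp)]
  simp [OmegaInvZero]

lemma unitary_mulVec_eq_zero' {n : ℕ} (U : Matrix (Fin n) (Fin n) ℂ)
    (hU : U ∈ Matrix.unitaryGroup (Fin n) ℂ) (w : Fin n → ℂ) :
    U *ᵥ w = 0 ↔ w = 0 := by
  constructor
  · intro h
    have h1 : star U * U = 1 := hU.1
    calc w = (star U * U) *ᵥ w := by rw [h1, Matrix.one_mulVec]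
    _ = star U *ᵥ (U *ᵥ w) := by rw [Matrix.mulVec_mulVec]
    _ = 0 := by rw [h, Matrix.mulVec_zero]
  · intro h; rw [h, Matrix.mulVec_zero]

/-- Under the GSVD structure, `(ker H_ba)^⊥` is the span of columns
`k−r−s+1, …, k` (1-indexed) of `U_a`. -/
theorem ker_Hba_orth_eq_span (Nt Nr Ne k r s : ℕ)
    (hNt : 0 < Nt) (hNr : 0 < Nr) (hNe : 0 < Ne)
    (hrsk : r + s ≤ k) (hkNt : k ≤ Nt) (hrsNr : r + s ≤ Nr) (hkrNe : k - r ≤ Ne)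
    (Ua : Matrix (Fin Nt) (Fin Nt) ℂ) (Uba : Matrix (Fin Nr) (Fin Nr) ℂ)
    (Uea : Matrix (Fin Ne) (Fin Ne) ℂ)
    (hUa : Ua ∈ Matrix.unitaryGroup (Fin Nt) ℂ)
    (hUba : Uba ∈ Matrix.unitaryGroup (Fin Nr) ℂ)
    (hUea : Uea ∈ Matrix.unitaryGroup (Fin Ne) ℂ)
    (ω : ℕ → ℂ) (hω : ∀ i < k, ω i ≠ 0)
    (b e : ℕ → ℝ)
    (hb : ∀ p < s, 0 < b p ∧ b p < 1) (he : ∀ p < s, 0 < e p ∧ e p < 1)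
    (hbe : ∀ p < s, b p ^ 2 + e p ^ 2 = 1)
    (Hba : Matrix (Fin Nr) (Fin Nt) ℂ) (Hea : Matrix (Fin Ne) (Fin Nt) ℂ)
    (hHba : Hba = Uba * SigmaBa Nr k r s b * OmegaInvZero k Nt ω * Uaᴴ)
    (hHea : Hea = Uea * SigmaEa Ne k r s e * OmegaInvZero k Nt ω * Uaᴴ) :
    (LinearMap.ker (Matrix.toEuclideanLin Hba))ᗮ =
      Submodule.span ℂ
        ((fun j : Fin Nt => (WithLp.toLp 2 (fun i => Ua i j) : EuclideanSpace ℂ (Fin Nt))) ''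
          {j : Fin Nt | k - (r + s) ≤ (j : ℕ) ∧ (j : ℕ) < k}) := by
  set S : Set (EuclideanSpace ℂ (Fin Nt)) :=
    ((fun j : Fin Nt => (WithLp.toLp 2 (fun i => Ua i j) : EuclideanSpace ℂ (Fin Nt))) ''
      {j : Fin Nt | k - (r + s) ≤ (j : ℕ) ∧ (j : ℕ) < k}) with hS
  have key : ∀ x : Fin Nt → ℂ, Hba *ᵥ x = 0 ↔
      ∀ j : Fin Nt, k - (r + s) ≤ (j : ℕ) → (j : ℕ) < k → (Uaᴴ *ᵥ x) j = 0 := by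
    intro x
    rw [hHba]
    rw [show (Uba * SigmaBa Nr k r s b * OmegaInvZero k Nt ω * Uaᴴ) *ᵥ x
        = Uba *ᵥ (SigmaBa Nr k r s b *ᵥ (OmegaInvZero k Nt ω *ᵥ (Uaᴴ *ᵥ x))) by
      simp only [Matrix.mulVec_mulVec, Matrix.mul_assoc]]
    rw [unitary_mulVec_eq_zero' Uba hUba]
    rw [sigmaBa_mulVec_eq_zero' Nr k r s hrsk hrsNr b hb]
    constructor
    · intro h j hj1 hj2
      have h2 := h ⟨(j : ℕ), hj2⟩ hj1
      rw [omegaInvZero_mulVec' k Nt hkNt] at h2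
      have hωne : (ω (j : ℕ))⁻¹ ≠ 0 := inv_ne_zero (hω _ hj2)
      have := (mul_eq_zero.mp h2).resolve_left hωne
      simpa using this
    · intro h j hj
      rw [omegaInvZero_mulVec' k Nt hkNt]
      rw [h ⟨(j : ℕ), lt_of_lt_of_le j.2 hkNt⟩ hj j.2, mul_zero]
  have hinner : ∀ (j : Fin Nt) (x : EuclideanSpace ℂ (Fin Nt)),
      @inner ℂ (EuclideanSpace ℂ (Fin Nt)) _ (WithLp.toLp 2 (fun i => Ua i j)) x = (Uaᴴ *ᵥ x) j := by
    intro j x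
    simp [PiLp.inner_apply, RCLike.inner_apply, Matrix.mulVec, dotProduct,
      Matrix.conjTranspose_apply, mul_comm]
  have hker : LinearMap.ker (Matrix.toEuclideanLin Hba) = (Submodule.span ℂ S)ᗮ := by
    ext x
    rw [LinearMap.mem_ker, Submodule.mem_orthogonal]
    have hx : Matrix.toEuclideanLin Hba x = 0 ↔ Hba *ᵥ (x : Fin Nt → ℂ) = 0 := by
      simp [Matrix.toEuclideanLin_apply]
    rw [hx, key]
    constructor
    · intro h u hu
      refine Submodule.span_induction ?_ (by simp) ?_ ?_ hu
      · rintro u ⟨j, ⟨hj1, hj2⟩, rfl⟩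
        rw [hinner]
        exact h j hj1 hj2
      · intro a c _ _ ha hc
        rw [inner_add_left, ha, hc, add_zero]
      · intro c a _ ha
        rw [inner_smul_left, ha, mul_zero]
    · intro h j hj1 hj2
      rw [← hinner]
      exact h _ (Submodule.subset_span ⟨j, ⟨hj1, hj2⟩, rfl⟩)
  rw [hker, Submodule.orthogonal_orthogonal]
end

section
/- Under the GSVD structure, the subspace S_ba = (ker H_ba)^⊥ ∩ ker H_ea of ℂ^{N_t} has dimension r: dim_ℂ S_ba = r. -/
open Matrix

namespace GSVDAux

open scoped ComplexInnerProductSpace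

/-- coordinate-vanishing subspace -/
def coordZero (Nt : ℕ) (S : Set ℕ) : Submodule ℂ (EuclideanSpace ℂ (Fin Nt)) where
  carrier := {x | ∀ j : Fin Nt, (j : ℕ) ∈ S → x j = 0}
  add_mem' hx hy j hj := by simp [hx j hj, hy j hj]
  zero_mem' j hj := rfl
  smul_mem' c x hx j hj := by simp [hx j hj]

lemma mem_coordZero_iff {Nt : ℕ} {S : Set ℕ} {x : EuclideanSpace ℂ (Fin Nt)} :
    x ∈ coordZero Nt S ↔ ∀ j : Fin Nt, (j : ℕ) ∈ S → x j = 0 := Iff.rfl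

lemma coordZero_orthogonal (Nt : ℕ) (S : Set ℕ) :
    (coordZero Nt S)ᗮ = coordZero Nt Sᶜ := by
  ext x
  constructor
  · intro hx j hj
    have h1 : (EuclideanSpace.single j (1:ℂ)) ∈ coordZero Nt S := by
      intro l hl
      have hne : l ≠ j := fun h => hj (h ▸ hl)
      simp [EuclideanSpace.single_apply, hne]
    have := (Submodule.mem_orthogonal _ _).mp hx _ h1
    simpa [EuclideanSpace.inner_single_left] using this
  · intro hx
    rw [Submodule.mem_orthogonal]
    intro u hu
    rw [PiLp.inner_apply]
    refine Finset.sum_eq_zero fun j _ => ?_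
    by_cases h : (j:ℕ) ∈ S
    · simp [hu j h]
    · simp [hx j h]

lemma coordZero_congr {Nt : ℕ} {S T : Set ℕ}
    (h : ∀ n < Nt, (n ∈ S ↔ n ∈ T)) : coordZero Nt S = coordZero Nt T := by
  ext x
  constructor
  · intro hx j hj; exact hx j ((h j j.isLt).mpr hj)
  · intro hx j hj; exact hx j ((h j j.isLt).mp hj)

lemma coordZero_inf {Nt : ℕ} (S T : Set ℕ) :
    coordZero Nt S ⊓ coordZero Nt T = coordZero Nt (S ∪ T) := by
  ext x
  constructor
  · rintro ⟨h1, h2⟩ j hj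
    rcases hj with hj | hj
    · exact h1 j hj
    · exact h2 j hj
  · intro h
    exact ⟨fun j hj => h j (Or.inl hj), fun j hj => h j (Or.inr hj)⟩

lemma coordZero_finrank (Nt k r : ℕ) (hrk : r ≤ k) (hkNt : k ≤ Nt) :
    Module.finrank ℂ ↥(coordZero Nt {n | n < k - r ∨ k ≤ n}) = r := by
  let φ : EuclideanSpace ℂ (Fin r) →ₗ[ℂ] EuclideanSpace ℂ (Fin Nt) :=
    { toFun := fun y => WithLp.toLp 2 (fun j : Fin Nt =>
        if h : k - r ≤ (j:ℕ) ∧ (j:ℕ) < k then y ⟨(j:ℕ) - (k-r), by omega⟩ else 0)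
      map_add' := by
        intro y z; ext j
        show (if h : k - r ≤ (j:ℕ) ∧ (j:ℕ) < k then (y+z) ⟨(j:ℕ) - (k-r), by omega⟩ else 0)
          = (if h : k - r ≤ (j:ℕ) ∧ (j:ℕ) < k then y ⟨(j:ℕ) - (k-r), by omega⟩ else 0)
            + (if h : k - r ≤ (j:ℕ) ∧ (j:ℕ) < k then z ⟨(j:ℕ) - (k-r), by omega⟩ else 0)
        split_ifs with h <;> simp
      map_smul' := by
        intro c y; ext j
        show (if h : k - r ≤ (j:ℕ) ∧ (j:ℕ) < k then (c • y) ⟨(j:ℕ) - (k-r), by omega⟩ else 0)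
          = c • (if h : k - r ≤ (j:ℕ) ∧ (j:ℕ) < k then y ⟨(j:ℕ) - (k-r), by omega⟩ else 0)
        split_ifs with h <;> simp }
  have hφ : ∀ (y : EuclideanSpace ℂ (Fin r)) (j : Fin Nt),
      φ y j = if h : k - r ≤ (j:ℕ) ∧ (j:ℕ) < k then y ⟨(j:ℕ) - (k-r), by omega⟩ else 0 :=
    fun y j => rfl
  have hinj : Function.Injective φ := by
    rw [← LinearMap.ker_eq_bot, LinearMap.ker_eq_bot']
    intro y hy
    ext p
    have hp : (k - r + (p:ℕ)) < Nt := by have := p.isLt; omega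
    have h0 : φ y (⟨k - r + (p:ℕ), hp⟩ : Fin Nt) = 0 := by rw [hy]; rfl
    rw [hφ] at h0
    have hcond : k - r ≤ ((⟨k - r + (p:ℕ), hp⟩ : Fin Nt):ℕ) ∧
        ((⟨k - r + (p:ℕ), hp⟩ : Fin Nt):ℕ) < k := by
      have := p.isLt; constructor <;> simp <;> omega
    rw [dif_pos hcond] at h0
    have hfin : (⟨((⟨k - r + (p:ℕ), hp⟩ : Fin Nt):ℕ) - (k - r), by omega⟩ : Fin r) = p := by
      ext; simp
    rw [hfin] at h0
    exact h0
  have hrange : LinearMap.range φ = coordZero Nt {n | n < k - r ∨ k ≤ n} := by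
    ext x
    constructor
    · rintro ⟨y, rfl⟩ j hj
      have hn : ¬(k - r ≤ (j:ℕ) ∧ (j:ℕ) < k) := by
        rcases hj with hj | hj <;> omega
      rw [hφ, dif_neg hn]
    · intro hx
      refine ⟨WithLp.toLp 2 (fun p => x ⟨k - r + (p:ℕ), by have := p.isLt; omega⟩), ?_⟩
      ext j
      rw [hφ]
      by_cases h : k - r ≤ (j:ℕ) ∧ (j:ℕ) < k
      · rw [dif_pos h]
        show x.ofLp _ = x.ofLp j
        apply congrArg x.ofLp
        ext; simp; omega
      · rw [dif_neg h]
        exact (hx j (by simp only [Set.mem_setOf_eq]; omega)).symm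
  rw [← hrange, LinearMap.finrank_range_of_inj hinj, finrank_euclideanSpace_fin]

lemma toEuclideanLin_mul {m n p : Type*} [Fintype m] [Fintype n] [Fintype p]
    [DecidableEq n] [DecidableEq p]
    (A : Matrix m n ℂ) (B : Matrix n p ℂ) :
    Matrix.toEuclideanLin (A * B) =
      (Matrix.toEuclideanLin A).comp (Matrix.toEuclideanLin B) := by
  apply LinearMap.ext
  intro x
  simp [Matrix.toEuclideanLin_apply, Matrix.mulVec_mulVec]

lemma toEuclideanLin_one {n : Type*} [Fintype n] [DecidableEq n] :
    Matrix.toEuclideanLin (1 : Matrix n n ℂ) = LinearMap.id := by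
  apply LinearMap.ext
  intro x
  simp [Matrix.toEuclideanLin_apply]

lemma toEuclideanLin_apply' {m n : ℕ} (M : Matrix (Fin m) (Fin n) ℂ)
    (x : EuclideanSpace ℂ (Fin n)) (i : Fin m) :
    Matrix.toEuclideanLin M x i = ∑ j, M i j * x j := by
  simp [Matrix.toEuclideanLin_apply, Matrix.mulVec, dotProduct]

lemma Mb_entry (Nt Nr k r s : ℕ) (b : ℕ → ℝ) (ω : ℕ → ℂ) (i : Fin Nr) (j : Fin Nt) :
    (SigmaBa Nr k r s b * OmegaInvZero k Nt ω) i j =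
      if (i : ℕ) + k = (j : ℕ) + Nr ∧ Nr - (r + s) ≤ (i : ℕ) then
        (if (i : ℕ) < Nr - r then ((b ((i : ℕ) - (Nr - (r + s))) : ℝ) : ℂ) else 1) *
          (ω (j : ℕ))⁻¹
      else 0 := by
  rw [Matrix.mul_apply]
  by_cases hjk : (j : ℕ) < k
  · rw [Finset.sum_eq_single (⟨(j : ℕ), hjk⟩ : Fin k)]
    · simp [SigmaBa, OmegaInvZero]
    · intro l _ hl
      have hne : (j : ℕ) ≠ (l : ℕ) := fun h => hl (Fin.ext h.symm)
      simp [OmegaInvZero, hne]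
    · simp
  · have hcond : ¬((i : ℕ) + k = (j : ℕ) + Nr ∧ Nr - (r + s) ≤ (i : ℕ)) := by
      rintro ⟨h1, -⟩; have := i.isLt; omega
    rw [if_neg hcond]
    refine Finset.sum_eq_zero fun l _ => ?_
    have hne : (j : ℕ) ≠ (l : ℕ) := by have := l.isLt; omega
    simp [OmegaInvZero, hne]

lemma Me_entry (Nt Ne k r s : ℕ) (e : ℕ → ℝ) (ω : ℕ → ℂ) (hrk : r ≤ k) (i : Fin Ne) (j : Fin Nt) :
    (SigmaEa Ne k r s e * OmegaInvZero k Nt ω) i j =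
      if (i : ℕ) = (j : ℕ) ∧ (i : ℕ) < k - r then
        (if (i : ℕ) < k - (r + s) then 1 else ((e ((i : ℕ) - (k - (r + s))) : ℝ) : ℂ)) *
          (ω (j : ℕ))⁻¹
      else 0 := by
  rw [Matrix.mul_apply]
  by_cases hjk : (j : ℕ) < k
  · rw [Finset.sum_eq_single (⟨(j : ℕ), hjk⟩ : Fin k)]
    · simp [SigmaEa, OmegaInvZero]
    · intro l _ hl
      have hne : (j : ℕ) ≠ (l : ℕ) := fun h => hl (Fin.ext h.symm)
      simp [OmegaInvZero, hne]
    · simp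
  · have hcond : ¬((i : ℕ) = (j : ℕ) ∧ (i : ℕ) < k - r) := by
      rintro ⟨h1, h2⟩; omega
    rw [if_neg hcond]
    refine Finset.sum_eq_zero fun l _ => ?_
    have hne : (j : ℕ) ≠ (l : ℕ) := by have := l.isLt; omega
    simp [OmegaInvZero, hne]

lemma ker_Mb (Nt Nr k r s : ℕ) (hrsk : r + s ≤ k) (hrsNr : r + s ≤ Nr)
    (b : ℕ → ℝ) (hb : ∀ p < s, 0 < b p ∧ b p < 1)
    (ω : ℕ → ℂ) (hω : ∀ i < k, ω i ≠ 0) :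
    LinearMap.ker (Matrix.toEuclideanLin (SigmaBa Nr k r s b * OmegaInvZero k Nt ω)) =
      coordZero Nt {n | k - (r + s) ≤ n ∧ n < k} := by
  ext x
  rw [LinearMap.mem_ker]
  constructor
  · intro hx j0 hj0
    obtain ⟨hlo, hhi⟩ := hj0
    have hi0 : (j0 : ℕ) + Nr - k < Nr := by omega
    set i0 : Fin Nr := ⟨(j0 : ℕ) + Nr - k, hi0⟩ with hi0def
    have h0 : Matrix.toEuclideanLin (SigmaBa Nr k r s b * OmegaInvZero k Nt ω) x i0 = 0 := by
      rw [hx]; rfl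
    rw [toEuclideanLin_apply'] at h0
    rw [Finset.sum_eq_single j0] at h0
    · rw [Mb_entry] at h0
      have hcond : (i0 : ℕ) + k = (j0 : ℕ) + Nr ∧ Nr - (r + s) ≤ (i0 : ℕ) := by
        constructor <;> simp [hi0def] <;> omega
      rw [if_pos hcond] at h0
      have hσ : (if (i0 : ℕ) < Nr - r then ((b ((i0 : ℕ) - (Nr - (r + s))) : ℝ) : ℂ) else 1) ≠ 0 := by
        split_ifs with h
        · have hps : (i0 : ℕ) - (Nr - (r + s)) < s := by simp [hi0def] at h ⊢; omega
          exact_mod_cast ne_of_gt (hb _ hps).1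
        · exact one_ne_zero
      have hω0 : (ω (j0 : ℕ))⁻¹ ≠ 0 := inv_ne_zero (hω _ hhi)
      rcases mul_eq_zero.mp h0 with h | h
      · exact absurd h (mul_ne_zero hσ hω0)
      · exact h
    · intro l _ hl
      rw [Mb_entry]
      have hcond : ¬((i0 : ℕ) + k = (l : ℕ) + Nr ∧ Nr - (r + s) ≤ (i0 : ℕ)) := by
        rintro ⟨h1, -⟩
        apply hl
        ext
        simp [hi0def] at h1
        omega
      rw [if_neg hcond, zero_mul]
    · intro h; exact absurd (Finset.mem_univ j0) h
  · intro hx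
    have : ∀ i : Fin Nr,
        Matrix.toEuclideanLin (SigmaBa Nr k r s b * OmegaInvZero k Nt ω) x i = 0 := by
      intro i
      rw [toEuclideanLin_apply']
      refine Finset.sum_eq_zero fun j _ => ?_
      rw [Mb_entry]
      by_cases h : (i : ℕ) + k = (j : ℕ) + Nr ∧ Nr - (r + s) ≤ (i : ℕ)
      · rw [if_pos h]
        obtain ⟨h1, h2⟩ := h
        have hj : k - (r + s) ≤ (j : ℕ) ∧ (j : ℕ) < k := by
          have := i.isLt; omega
        rw [hx j hj, mul_zero]
      · rw [if_neg h, zero_mul]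
    ext i
    exact this i

lemma ker_Me (Nt Ne k r s : ℕ) (hrsk : r + s ≤ k) (hkrNe : k - r ≤ Ne)
    (e : ℕ → ℝ) (he : ∀ p < s, 0 < e p ∧ e p < 1)
    (ω : ℕ → ℂ) (hω : ∀ i < k, ω i ≠ 0) :
    LinearMap.ker (Matrix.toEuclideanLin (SigmaEa Ne k r s e * OmegaInvZero k Nt ω)) =
      coordZero Nt {n | n < k - r} := by
  have hrk : r ≤ k := by omega
  ext x
  rw [LinearMap.mem_ker]
  constructor
  · intro hx j0 hj0
    have hj0' : (j0 : ℕ) < k - r := hj0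
    have hi0 : (j0 : ℕ) < Ne := by omega
    set i0 : Fin Ne := ⟨(j0 : ℕ), hi0⟩ with hi0def
    have h0 : Matrix.toEuclideanLin (SigmaEa Ne k r s e * OmegaInvZero k Nt ω) x i0 = 0 := by
      rw [hx]; rfl
    rw [toEuclideanLin_apply'] at h0
    rw [Finset.sum_eq_single j0] at h0
    · rw [Me_entry _ _ _ _ _ _ _ hrk] at h0
      have hcond : (i0 : ℕ) = (j0 : ℕ) ∧ (i0 : ℕ) < k - r := by
        constructor <;> simp [hi0def] <;> omega
      rw [if_pos hcond] at h0
      have hσ : (if (i0 : ℕ) < k - (r + s) then 1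
          else ((e ((i0 : ℕ) - (k - (r + s))) : ℝ) : ℂ)) ≠ 0 := by
        split_ifs with h
        · exact one_ne_zero
        · have hps : (i0 : ℕ) - (k - (r + s)) < s := by simp [hi0def] at h ⊢; omega
          exact_mod_cast ne_of_gt (he _ hps).1
      have hω0 : (ω (j0 : ℕ))⁻¹ ≠ 0 := inv_ne_zero (hω _ (by omega))
      rcases mul_eq_zero.mp h0 with h | h
      · exact absurd h (mul_ne_zero hσ hω0)
      · exact h
    · intro l _ hl
      rw [Me_entry _ _ _ _ _ _ _ hrk]
      have hcond : ¬((i0 : ℕ) = (l : ℕ) ∧ (i0 : ℕ) < k - r) := by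
        rintro ⟨h1, -⟩
        apply hl
        ext
        simp [hi0def] at h1
        omega
      rw [if_neg hcond, zero_mul]
    · intro h; exact absurd (Finset.mem_univ j0) h
  · intro hx
    have : ∀ i : Fin Ne,
        Matrix.toEuclideanLin (SigmaEa Ne k r s e * OmegaInvZero k Nt ω) x i = 0 := by
      intro i
      rw [toEuclideanLin_apply']
      refine Finset.sum_eq_zero fun j _ => ?_
      rw [Me_entry _ _ _ _ _ _ _ hrk]
      by_cases h : (i : ℕ) = (j : ℕ) ∧ (i : ℕ) < k - r
      · rw [if_pos h]
        obtain ⟨h1, h2⟩ := h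
        have hj : (j : ℕ) < k - r := by omega
        rw [hx j hj, mul_zero]
      · rw [if_neg h, zero_mul]
    ext i
    exact this i

end GSVDAux

open scoped ComplexInnerProductSpace

/-- Under the GSVD structure, `dim_ℂ S_ba = r` where `S_ba = (ker H_ba)^⊥ ⊓ ker H_ea`. -/
theorem finrank_S_ba (Nt Nr Ne k r s : ℕ)
    (hNt : 0 < Nt) (hNr : 0 < Nr) (hNe : 0 < Ne)
    (hrsk : r + s ≤ k) (hkNt : k ≤ Nt) (hrsNr : r + s ≤ Nr) (hkrNe : k - r ≤ Ne)
    (Ua : Matrix (Fin Nt) (Fin Nt) ℂ) (Uba : Matrix (Fin Nr) (Fin Nr) ℂ)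
    (Uea : Matrix (Fin Ne) (Fin Ne) ℂ)
    (hUa : Ua ∈ Matrix.unitaryGroup (Fin Nt) ℂ)
    (hUba : Uba ∈ Matrix.unitaryGroup (Fin Nr) ℂ)
    (hUea : Uea ∈ Matrix.unitaryGroup (Fin Ne) ℂ)
    (ω : ℕ → ℂ) (hω : ∀ i < k, ω i ≠ 0)
    (b e : ℕ → ℝ)
    (hb : ∀ p < s, 0 < b p ∧ b p < 1) (he : ∀ p < s, 0 < e p ∧ e p < 1)
    (hbe : ∀ p < s, b p ^ 2 + e p ^ 2 = 1)
    (Hba : Matrix (Fin Nr) (Fin Nt) ℂ) (Hea : Matrix (Fin Ne) (Fin Nt) ℂ)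
    (hHba : Hba = Uba * SigmaBa Nr k r s b * OmegaInvZero k Nt ω * Uaᴴ)
    (hHea : Hea = Uea * SigmaEa Ne k r s e * OmegaInvZero k Nt ω * Uaᴴ) :
    Module.finrank ℂ ↥((LinearMap.ker (Matrix.toEuclideanLin Hba))ᗮ ⊓ LinearMap.ker (Matrix.toEuclideanLin Hea)) = r := by
  classical
  have hrk : r ≤ k := by omega
  have hUa1 : Ua * Uaᴴ = 1 := by
    exact Matrix.mem_unitaryGroup_iff.mp hUa
  have hUa2 : Uaᴴ * Ua = 1 := by
    exact Matrix.mem_unitaryGroup_iff'.mp hUa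
  have hUba2 : Ubaᴴ * Uba = 1 := by
    exact Matrix.mem_unitaryGroup_iff'.mp hUba
  have hUea2 : Ueaᴴ * Uea = 1 := by
    exact Matrix.mem_unitaryGroup_iff'.mp hUea
  set U := Matrix.toEuclideanLin Uaᴴ with hU
  set V := Matrix.toEuclideanLin Ua with hV
  have hVU : V.comp U = LinearMap.id := by
    rw [hU, hV, ← GSVDAux.toEuclideanLin_mul, hUa1, GSVDAux.toEuclideanLin_one]
  have hUV : U.comp V = LinearMap.id := by
    rw [hU, hV, ← GSVDAux.toEuclideanLin_mul, hUa2, GSVDAux.toEuclideanLin_one]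
  have hVUx : ∀ x, V (U x) = x := fun x => by simpa using DFunLike.congr_fun hVU x
  have hUVx : ∀ x, U (V x) = x := fun x => by simpa using DFunLike.congr_fun hUV x
  set Mb := SigmaBa Nr k r s b * OmegaInvZero k Nt ω with hMb
  set Me := SigmaEa Ne k r s e * OmegaInvZero k Nt ω with hMe
  have hker_ba : LinearMap.ker (Matrix.toEuclideanLin Hba) =
      Submodule.comap U (LinearMap.ker (Matrix.toEuclideanLin Mb)) := by
    rw [hHba, GSVDAux.toEuclideanLin_mul, LinearMap.ker_comp]
    congr 1
    rw [Matrix.mul_assoc, ← hMb, GSVDAux.toEuclideanLin_mul, LinearMap.ker_comp]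
    have hinj : LinearMap.ker (Matrix.toEuclideanLin Uba) = ⊥ := by
      rw [LinearMap.ker_eq_bot]
      have hcomp : (Matrix.toEuclideanLin Ubaᴴ).comp (Matrix.toEuclideanLin Uba) =
          LinearMap.id := by
        rw [← GSVDAux.toEuclideanLin_mul, hUba2, GSVDAux.toEuclideanLin_one]
      exact Function.LeftInverse.injective
        (fun x => by simpa using DFunLike.congr_fun hcomp x)
    rw [hinj, Submodule.comap_bot]
  have hker_ea : LinearMap.ker (Matrix.toEuclideanLin Hea) =
      Submodule.comap U (LinearMap.ker (Matrix.toEuclideanLin Me)) := by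
    rw [hHea, GSVDAux.toEuclideanLin_mul, LinearMap.ker_comp]
    congr 1
    rw [Matrix.mul_assoc, ← hMe, GSVDAux.toEuclideanLin_mul, LinearMap.ker_comp]
    have hinj : LinearMap.ker (Matrix.toEuclideanLin Uea) = ⊥ := by
      rw [LinearMap.ker_eq_bot]
      have hcomp : (Matrix.toEuclideanLin Ueaᴴ).comp (Matrix.toEuclideanLin Uea) =
          LinearMap.id := by
        rw [← GSVDAux.toEuclideanLin_mul, hUea2, GSVDAux.toEuclideanLin_one]
      exact Function.LeftInverse.injective
        (fun x => by simpa using DFunLike.congr_fun hcomp x)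
    rw [hinj, Submodule.comap_bot]
  have hadj : U = LinearMap.adjoint V := by
    rw [hU, hV, Matrix.toEuclideanLin_conjTranspose_eq_adjoint]
  have hinner : ∀ x y : EuclideanSpace ℂ (Fin Nt), (inner ℂ (U x) (U y) : ℂ) = inner ℂ x y := by
    intro x y
    have h1 : (inner ℂ ((LinearMap.adjoint V) x) (U y) : ℂ) = inner ℂ x (V (U y)) :=
      LinearMap.adjoint_inner_left V (U y) x
    rw [← hadj, hVUx] at h1
    exact h1
  have hcoorth : ∀ (K : Submodule ℂ (EuclideanSpace ℂ (Fin Nt))),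
      (Submodule.comap U K)ᗮ = Submodule.comap U Kᗮ := by
    intro K
    ext x
    constructor
    · intro hx
      rw [Submodule.mem_comap, Submodule.mem_orthogonal]
      intro w hw
      have h2 := (Submodule.mem_orthogonal _ _).mp hx (V w)
        (by rw [Submodule.mem_comap, hUVx]; exact hw)
      calc (inner ℂ w (U x) : ℂ) = inner ℂ (U (V w)) (U x) := by rw [hUVx]
        _ = inner ℂ (V w) x := hinner _ _
        _ = 0 := h2
    · intro hx
      rw [Submodule.mem_comap] at hx
      rw [Submodule.mem_orthogonal]
      intro u hu
      rw [Submodule.mem_comap] at hu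
      calc (inner ℂ u x : ℂ) = inner ℂ (U u) (U x) := (hinner _ _).symm
        _ = 0 := (Submodule.mem_orthogonal _ _).mp hx _ hu
  rw [hker_ba, hker_ea, hcoorth, ← Submodule.comap_inf]
  set eqv : EuclideanSpace ℂ (Fin Nt) ≃ₗ[ℂ] EuclideanSpace ℂ (Fin Nt) :=
    LinearEquiv.ofLinear U V hUV hVU with heqv
  have hUeq : (eqv : EuclideanSpace ℂ (Fin Nt) →ₗ[ℂ] EuclideanSpace ℂ (Fin Nt)) = U := rfl
  rw [← hUeq, Submodule.comap_equiv_eq_map_symm eqv, LinearEquiv.finrank_map_eq]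
  rw [hMb, hMe, GSVDAux.ker_Mb Nt Nr k r s hrsk hrsNr b hb ω hω,
    GSVDAux.ker_Me Nt Ne k r s hrsk hkrNe e he ω hω,
    GSVDAux.coordZero_orthogonal, GSVDAux.coordZero_inf]
  rw [GSVDAux.coordZero_congr (T := {n | n < k - r ∨ k ≤ n})
    (by intro n _; simp only [Set.mem_union, Set.mem_compl_iff, Set.mem_setOf_eq]; omega)]
  exact GSVDAux.coordZero_finrank Nt k r hrk hkNt
end

section
/- Under the GSVD structure, the subspace S_be = (ker H_ba)^⊥ ∩ (ker H_ea)^⊥ of ℂ^{N_t} has dimension s: dim_ℂ S_be = s. -/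
open Matrix

namespace GSVDaux

set_option linter.unnecessarySeqFocus false

/-- Coordinate subspace: vectors vanishing on indices satisfying `P`. -/
noncomputable def coordSub (n : ℕ) (P : Fin n → Prop) :
    Submodule ℂ (EuclideanSpace ℂ (Fin n)) where
  carrier := {x | ∀ j, P j → x j = 0}
  add_mem' := by
    intro a b ha hb j hj
    simp [PiLp.add_apply, ha j hj, hb j hj]
  zero_mem' := by intro j hj; rfl
  smul_mem' := by
    intro c a ha j hj
    simp [PiLp.smul_apply, ha j hj]

lemma mem_coordSub {n : ℕ} {P : Fin n → Prop} {x : EuclideanSpace ℂ (Fin n)} :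
    x ∈ coordSub n P ↔ ∀ j, P j → x j = 0 := Iff.rfl

lemma coordSub_congr {n : ℕ} {P Q : Fin n → Prop} (h : ∀ j, P j ↔ Q j) :
    coordSub n P = coordSub n Q := by
  ext x; simp [mem_coordSub, h]

lemma coordSub_sup {n : ℕ} (P Q : Fin n → Prop) :
    coordSub n P ⊔ coordSub n Q = coordSub n (fun j => P j ∧ Q j) := by
  classical
  apply le_antisymm
  · apply sup_le
    · intro x hx j hj; exact hx j hj.1
    · intro x hx j hj; exact hx j hj.2
  · intro x hx
    rw [Submodule.mem_sup]
    refine ⟨(WithLp.toLp 2 (fun j => if P j then 0 else x j) : EuclideanSpace ℂ (Fin n)), ?_,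
      (WithLp.toLp 2 (fun j => if P j then x j else 0) : EuclideanSpace ℂ (Fin n)), ?_, ?_⟩
    · intro j hj; simp [hj]
    · intro j hj
      by_cases hp : P j
      · simp [hp, hx j ⟨hp, hj⟩]
      · simp [hp]
    · ext j
      by_cases hp : P j <;> simp [PiLp.add_apply, hp]

noncomputable def coordSubEquiv (n : ℕ) (P : Fin n → Prop) [DecidablePred P] :
    (coordSub n P) ≃ₗ[ℂ] ({j : Fin n // ¬ P j} → ℂ) where
  toFun x := fun j => x.1 j.1
  map_add' x y := by funext j; simp [PiLp.add_apply]
  map_smul' c x := by funext j; simp [PiLp.smul_apply]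
  invFun y := ⟨(WithLp.toLp 2 (fun j => if h : P j then 0 else y ⟨j, h⟩) : EuclideanSpace ℂ (Fin n)),
    by intro j hj; simp [hj]⟩
  left_inv x := by
    apply Subtype.ext
    ext j
    by_cases hp : P j
    · simp [hp, x.2 j hp]
    · simp [hp]
  right_inv y := by funext j; simp [j.2]

lemma finrank_coordSub (n : ℕ) (P : Fin n → Prop) [DecidablePred P] :
    Module.finrank ℂ (coordSub n P) = Fintype.card {j : Fin n // ¬ P j} := by
  rw [(coordSubEquiv n P).finrank_eq, Module.finrank_fintype_fun_eq_card]

lemma card_interval (n a b : ℕ) (hb : b ≤ n) (hab : a ≤ b) :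
    Fintype.card {j : Fin n // a ≤ (j : ℕ) ∧ (j : ℕ) < b} = b - a := by
  have e : {j : Fin n // a ≤ (j : ℕ) ∧ (j : ℕ) < b} ≃ Fin (b - a) :=
    { toFun := fun j => ⟨(j : ℕ) - a, by omega⟩
      invFun := fun m => ⟨⟨(m : ℕ) + a, by omega⟩, by simp; omega⟩
      left_inv := fun j => by
        apply Subtype.ext; apply Fin.ext; simp; omega
      right_inv := fun m => by apply Fin.ext; simp }
  rw [Fintype.card_congr e, Fintype.card_fin]

lemma mem_ker_toEuclideanLin_iff {m n : ℕ} (M : Matrix (Fin m) (Fin n) ℂ)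
    (x : EuclideanSpace ℂ (Fin n)) :
    x ∈ LinearMap.ker (Matrix.toEuclideanLin M) ↔ M *ᵥ (fun j => x j) = 0 := by
  rw [LinearMap.mem_ker]
  constructor
  · intro h
    funext i
    have : (Matrix.toEuclideanLin M x) i = 0 := by rw [h]; rfl
    exact this
  · intro h
    have : ∀ i, (Matrix.toEuclideanLin M x) i = 0 := by
      intro i
      show (M *ᵥ fun j => x j) i = 0
      rw [h]; rfl
    ext i
    exact this i

lemma unitary_mulVec_eq_zero {n : ℕ} {U : Matrix (Fin n) (Fin n) ℂ}
    (hU : U ∈ Matrix.unitaryGroup (Fin n) ℂ) (v : Fin n → ℂ) :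
    U *ᵥ v = 0 ↔ v = 0 := by
  constructor
  · intro h
    have := congrArg (fun w => Uᴴ *ᵥ w) h
    simpa [Matrix.mulVec_mulVec, ← Matrix.star_eq_conjTranspose,
      (Matrix.mem_unitaryGroup_iff'.mp hU : star U * U = 1)] using this
  · intro h; simp [h]

lemma omegaInv_mulVec {k Nt : ℕ} (hk : k ≤ Nt) (ω : ℕ → ℂ) (y : Fin Nt → ℂ) (l : Fin k) :
    (OmegaInvZero k Nt ω *ᵥ y) l = (ω (l : ℕ))⁻¹ * y (Fin.castLE hk l) := by
  rw [Matrix.mulVec]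
  simp only [dotProduct, OmegaInvZero, Matrix.of_apply]
  rw [Finset.sum_eq_single (Fin.castLE hk l)]
  · simp
  · intro j _ hj
    rw [if_neg, zero_mul]
    intro h
    exact hj (Fin.ext h)
  · simp

lemma sigmaBa_kernel (Nt Nr k r s : ℕ)
    (hrsk : r + s ≤ k) (hkNt : k ≤ Nt) (hrsNr : r + s ≤ Nr)
    (ω : ℕ → ℂ) (hω : ∀ i < k, ω i ≠ 0)
    (b : ℕ → ℝ) (hb : ∀ p < s, 0 < b p ∧ b p < 1)
    (y : Fin Nt → ℂ) :
    (SigmaBa Nr k r s b * OmegaInvZero k Nt ω) *ᵥ y = 0 ↔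
      ∀ j : Fin Nt, k - (r + s) ≤ (j : ℕ) ∧ (j : ℕ) < k → y j = 0 := by
  have key : ∀ i : Fin Nr, ((SigmaBa Nr k r s b * OmegaInvZero k Nt ω) *ᵥ y) i
      = ∑ l : Fin k, SigmaBa Nr k r s b i l * ((ω (l : ℕ))⁻¹ * y (Fin.castLE hkNt l)) := by
    intro i
    rw [← Matrix.mulVec_mulVec]
    simp only [Matrix.mulVec, dotProduct]
    exact Finset.sum_congr rfl fun l _ => by
      rw [show (∑ x, OmegaInvZero k Nt ω l x * y x) = (OmegaInvZero k Nt ω *ᵥ y) l from rfl,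
        omegaInv_mulVec hkNt]
  rw [funext_iff]
  constructor
  · intro h j hj
    obtain ⟨hj1, hj2⟩ := hj
    have hiNr : (j : ℕ) + Nr - k < Nr := by omega
    set i : Fin Nr := ⟨(j : ℕ) + Nr - k, hiNr⟩ with hi
    set l₀ : Fin k := ⟨(j : ℕ), hj2⟩ with hl₀
    have hrow := h i
    rw [key i, Pi.zero_apply, Finset.sum_eq_single l₀] at hrow
    · have hcond : (i : ℕ) + k = (l₀ : ℕ) + Nr ∧ Nr - (r + s) ≤ (i : ℕ) := by
        constructor <;> simp [hi, hl₀] <;> omega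
      have hcast : Fin.castLE hkNt l₀ = j := by apply Fin.ext; rfl
      have hentry : SigmaBa Nr k r s b i l₀ ≠ 0 := by
        rw [SigmaBa, Matrix.of_apply, if_pos hcond]
        by_cases hlt : (i : ℕ) < Nr - r
        · rw [if_pos hlt]
          have hps : (i : ℕ) - (Nr - (r + s)) < s := by omega
          exact Complex.ofReal_ne_zero.mpr (ne_of_gt (hb _ hps).1)
        · rw [if_neg hlt]; exact one_ne_zero
      have hω' : (ω (l₀ : ℕ))⁻¹ ≠ 0 := inv_ne_zero (hω _ hj2)
      rw [hcast] at hrow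
      rcases mul_eq_zero.mp hrow with h1 | h1
      · exact absurd h1 hentry
      · rcases mul_eq_zero.mp h1 with h2 | h2
        · exact absurd h2 hω'
        · exact h2
    · intro l _ hl
      rw [SigmaBa, Matrix.of_apply, if_neg, zero_mul]
      rintro ⟨h1, _⟩
      apply hl
      apply Fin.ext
      simp only [hi] at h1
      simp [hl₀]
      omega
    · simp
  · intro hy i
    rw [key i, Pi.zero_apply]
    apply Finset.sum_eq_zero
    intro l _
    by_cases hcond : (i : ℕ) + k = (l : ℕ) + Nr ∧ Nr - (r + s) ≤ (i : ℕ)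
    · have : y (Fin.castLE hkNt l) = 0 := by
        apply hy
        simp only [Fin.coe_castLE]
        omega
      rw [this, mul_zero, mul_zero]
    · rw [SigmaBa, Matrix.of_apply, if_neg hcond, zero_mul]

lemma sigmaEa_kernel (Nt Ne k r s : ℕ)
    (hrsk : r + s ≤ k) (hkNt : k ≤ Nt) (hkrNe : k - r ≤ Ne)
    (ω : ℕ → ℂ) (hω : ∀ i < k, ω i ≠ 0)
    (e : ℕ → ℝ) (he : ∀ p < s, 0 < e p ∧ e p < 1)
    (y : Fin Nt → ℂ) :
    (SigmaEa Ne k r s e * OmegaInvZero k Nt ω) *ᵥ y = 0 ↔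
      ∀ j : Fin Nt, (j : ℕ) < k - r → y j = 0 := by
  have key : ∀ i : Fin Ne, ((SigmaEa Ne k r s e * OmegaInvZero k Nt ω) *ᵥ y) i
      = ∑ l : Fin k, SigmaEa Ne k r s e i l * ((ω (l : ℕ))⁻¹ * y (Fin.castLE hkNt l)) := by
    intro i
    rw [← Matrix.mulVec_mulVec]
    simp only [Matrix.mulVec, dotProduct]
    exact Finset.sum_congr rfl fun l _ => by
      rw [show (∑ x, OmegaInvZero k Nt ω l x * y x) = (OmegaInvZero k Nt ω *ᵥ y) l from rfl,
        omegaInv_mulVec hkNt]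
  rw [funext_iff]
  constructor
  · intro h j hj
    have hjk : (j : ℕ) < k := by omega
    have hiNe : (j : ℕ) < Ne := by omega
    set i : Fin Ne := ⟨(j : ℕ), hiNe⟩ with hi
    set l₀ : Fin k := ⟨(j : ℕ), hjk⟩ with hl₀
    have hrow := h i
    rw [key i, Pi.zero_apply, Finset.sum_eq_single l₀] at hrow
    · have hcond : (i : ℕ) = (l₀ : ℕ) ∧ (i : ℕ) < k - r := by
        constructor <;> simp [hi, hl₀] <;> omega
      have hcast : Fin.castLE hkNt l₀ = j := by apply Fin.ext; rfl
      have hentry : SigmaEa Ne k r s e i l₀ ≠ 0 := by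
        rw [SigmaEa, Matrix.of_apply, if_pos hcond]
        by_cases hlt : (i : ℕ) < k - (r + s)
        · rw [if_pos hlt]; exact one_ne_zero
        · rw [if_neg hlt]
          have hps : (i : ℕ) - (k - (r + s)) < s := by omega
          exact Complex.ofReal_ne_zero.mpr (ne_of_gt (he _ hps).1)
      have hω' : (ω (l₀ : ℕ))⁻¹ ≠ 0 := inv_ne_zero (hω _ hjk)
      rw [hcast] at hrow
      rcases mul_eq_zero.mp hrow with h1 | h1
      · exact absurd h1 hentry
      · rcases mul_eq_zero.mp h1 with h2 | h2
        · exact absurd h2 hω'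
        · exact h2
    · intro l _ hl
      rw [SigmaEa, Matrix.of_apply, if_neg, zero_mul]
      rintro ⟨h1, _⟩
      apply hl
      apply Fin.ext
      simp only [hi] at h1
      simp [hl₀]
      omega
    · simp
  · intro hy i
    rw [key i, Pi.zero_apply]
    apply Finset.sum_eq_zero
    intro l _
    by_cases hcond : (i : ℕ) = (l : ℕ) ∧ (i : ℕ) < k - r
    · have : y (Fin.castLE hkNt l) = 0 := by
        apply hy
        simp only [Fin.coe_castLE]
        omega
      rw [this, mul_zero, mul_zero]
    · rw [SigmaEa, Matrix.of_apply, if_neg hcond, zero_mul]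

end GSVDaux

/-- Under the GSVD structure, `dim_ℂ S_be = s` where `S_be = (ker H_ba)^⊥ ⊓ (ker H_ea)^⊥`. -/
theorem finrank_S_be (Nt Nr Ne k r s : ℕ)
    (hNt : 0 < Nt) (hNr : 0 < Nr) (hNe : 0 < Ne)
    (hrsk : r + s ≤ k) (hkNt : k ≤ Nt) (hrsNr : r + s ≤ Nr) (hkrNe : k - r ≤ Ne)
    (Ua : Matrix (Fin Nt) (Fin Nt) ℂ) (Uba : Matrix (Fin Nr) (Fin Nr) ℂ)
    (Uea : Matrix (Fin Ne) (Fin Ne) ℂ)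
    (hUa : Ua ∈ Matrix.unitaryGroup (Fin Nt) ℂ)
    (hUba : Uba ∈ Matrix.unitaryGroup (Fin Nr) ℂ)
    (hUea : Uea ∈ Matrix.unitaryGroup (Fin Ne) ℂ)
    (ω : ℕ → ℂ) (hω : ∀ i < k, ω i ≠ 0)
    (b e : ℕ → ℝ)
    (hb : ∀ p < s, 0 < b p ∧ b p < 1) (he : ∀ p < s, 0 < e p ∧ e p < 1)
    (hbe : ∀ p < s, b p ^ 2 + e p ^ 2 = 1)
    (Hba : Matrix (Fin Nr) (Fin Nt) ℂ) (Hea : Matrix (Fin Ne) (Fin Nt) ℂ)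
    (hHba : Hba = Uba * SigmaBa Nr k r s b * OmegaInvZero k Nt ω * Uaᴴ)
    (hHea : Hea = Uea * SigmaEa Ne k r s e * OmegaInvZero k Nt ω * Uaᴴ) :
    Module.finrank ℂ ↥((LinearMap.ker (Matrix.toEuclideanLin Hba))ᗮ ⊓ (LinearMap.ker (Matrix.toEuclideanLin Hea))ᗮ) = s := by
  classical
  have hUaH : Uaᴴ * Ua = 1 := by
    have := hUa.1
    rwa [Matrix.star_eq_conjTranspose] at this
  have hUaH' : Ua * Uaᴴ = 1 := by
    have := hUa.2
    rwa [Matrix.star_eq_conjTranspose] at this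
  -- the linear equivalence given by `Uaᴴ`
  let eU : EuclideanSpace ℂ (Fin Nt) ≃ₗ[ℂ] EuclideanSpace ℂ (Fin Nt) :=
    LinearEquiv.ofLinear (Matrix.toEuclideanLin Uaᴴ) (Matrix.toEuclideanLin Ua)
      (by
        apply LinearMap.ext; intro x
        ext i
        show (Uaᴴ *ᵥ (Ua *ᵥ fun j => x j)) i = x i
        rw [Matrix.mulVec_mulVec, hUaH, Matrix.one_mulVec])
      (by
        apply LinearMap.ext; intro x
        ext i
        show (Ua *ᵥ (Uaᴴ *ᵥ fun j => x j)) i = x i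
        rw [Matrix.mulVec_mulVec, hUaH', Matrix.one_mulVec])
  have heUapp : ∀ (x : EuclideanSpace ℂ (Fin Nt)) (j : Fin Nt),
      (eU x) j = (Uaᴴ *ᵥ fun i => x i) j := fun x j => rfl
  set P₁ : Fin Nt → Prop := fun j => k - (r + s) ≤ (j : ℕ) ∧ (j : ℕ) < k with hP₁
  set P₂ : Fin Nt → Prop := fun j => (j : ℕ) < k - r with hP₂
  have hker1 : LinearMap.ker (Matrix.toEuclideanLin Hba)
      = Submodule.comap (eU : EuclideanSpace ℂ (Fin Nt) →ₗ[ℂ] EuclideanSpace ℂ (Fin Nt))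
          (GSVDaux.coordSub Nt P₁) := by
    ext x
    rw [Submodule.mem_comap, GSVDaux.mem_ker_toEuclideanLin_iff, GSVDaux.mem_coordSub]
    have hfact : Hba = Uba * ((SigmaBa Nr k r s b * OmegaInvZero k Nt ω) * Uaᴴ) := by
      rw [hHba]; simp only [Matrix.mul_assoc]
    rw [hfact, ← Matrix.mulVec_mulVec, ← Matrix.mulVec_mulVec,
      GSVDaux.unitary_mulVec_eq_zero hUba,
      GSVDaux.sigmaBa_kernel Nt Nr k r s hrsk hkNt hrsNr ω hω b hb]
    exact Iff.rfl
  have hker2 : LinearMap.ker (Matrix.toEuclideanLin Hea)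
      = Submodule.comap (eU : EuclideanSpace ℂ (Fin Nt) →ₗ[ℂ] EuclideanSpace ℂ (Fin Nt))
          (GSVDaux.coordSub Nt P₂) := by
    ext x
    rw [Submodule.mem_comap, GSVDaux.mem_ker_toEuclideanLin_iff, GSVDaux.mem_coordSub]
    have hfact : Hea = Uea * ((SigmaEa Ne k r s e * OmegaInvZero k Nt ω) * Uaᴴ) := by
      rw [hHea]; simp only [Matrix.mul_assoc]
    rw [hfact, ← Matrix.mulVec_mulVec, ← Matrix.mulVec_mulVec,
      GSVDaux.unitary_mulVec_eq_zero hUea,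
      GSVDaux.sigmaEa_kernel Nt Ne k r s hrsk hkNt hkrNe ω hω e he]
    exact Iff.rfl
  rw [Submodule.inf_orthogonal, hker1, hker2,
    Submodule.comap_equiv_eq_map_symm, Submodule.comap_equiv_eq_map_symm,
    ← Submodule.map_sup, GSVDaux.coordSub_sup]
  have hPP : ∀ j : Fin Nt, (P₁ j ∧ P₂ j) ↔ (k - (r + s) ≤ (j : ℕ) ∧ (j : ℕ) < k - r) := by
    intro j; simp only [hP₁, hP₂]; omega
  rw [GSVDaux.coordSub_congr hPP]
  set K : Submodule ℂ (EuclideanSpace ℂ (Fin Nt)) :=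
    Submodule.map (eU.symm : EuclideanSpace ℂ (Fin Nt) →ₗ[ℂ] EuclideanSpace ℂ (Fin Nt))
      (GSVDaux.coordSub Nt fun j => k - (r + s) ≤ (j : ℕ) ∧ (j : ℕ) < k - r) with hK
  have hcard : Module.finrank ℂ K = Nt - s := by
    rw [hK, LinearEquiv.finrank_map_eq, GSVDaux.finrank_coordSub,
      Fintype.card_subtype_compl,
      GSVDaux.card_interval Nt (k - (r + s)) (k - r) (by omega) (by omega),
      Fintype.card_fin]
    omega
  have hsum := Submodule.finrank_add_finrank_orthogonal K
  rw [finrank_euclideanSpace_fin, hcard] at hsum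
  omega
end

section
/- Under the GSVD structure, the subspace S_ea = ker H_ba ∩ (ker H_ea)^⊥ of ℂ^{N_t} has dimension k − r − s: dim_ℂ S_ea = k − r − s. -/
open Matrix

/- ## Auxiliary machinery -/

/-- The coordinate subspace of `EuclideanSpace ℂ (Fin n)` consisting of vectors vanishing on
the index set `T`. -/
noncomputable def coordSub (n : ℕ) (T : Set ℕ) : Submodule ℂ (EuclideanSpace ℂ (Fin n)) where
  carrier := {x | ∀ j : Fin n, (j : ℕ) ∈ T → x j = 0}
  add_mem' := by
    intro a b ha hb j hj
    show a j + b j = 0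
    rw [ha j hj, hb j hj, add_zero]
  zero_mem' := fun j _ => rfl
  smul_mem' := by
    intro c x hx j hj
    show c * x j = 0
    rw [hx j hj, mul_zero]

lemma mem_coordSub {n : ℕ} {T : Set ℕ} {x : EuclideanSpace ℂ (Fin n)} :
    x ∈ coordSub n T ↔ ∀ j : Fin n, (j : ℕ) ∈ T → x j = 0 := Iff.rfl

lemma coordSub_orthogonal (n : ℕ) (T : Set ℕ) : (coordSub n T)ᗮ = coordSub n Tᶜ := by
  ext x
  rw [Submodule.mem_orthogonal, mem_coordSub]
  constructor
  · intro h j hj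
    have hy : (EuclideanSpace.single j (1:ℂ)) ∈ coordSub n T := by
      intro j' hj'
      rw [EuclideanSpace.single_apply]
      have : j' ≠ j := fun e => hj (e ▸ hj')
      simp [this]
    have := h _ hy
    rw [EuclideanSpace.inner_single_left] at this
    simpa using this
  · intro h y hy
    rw [PiLp.inner_apply]
    apply Finset.sum_eq_zero
    intro j _
    by_cases hj : (j:ℕ) ∈ T
    · rw [hy j hj]; simp
    · rw [h j hj]; simp

lemma coordSub_inf (n : ℕ) (T1 T2 : Set ℕ) :
    coordSub n T1 ⊓ coordSub n T2 = coordSub n (T1 ∪ T2) := by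
  ext x
  simp only [Submodule.mem_inf, mem_coordSub]
  constructor
  · rintro ⟨h1, h2⟩ j hj
    rcases hj with hj | hj
    · exact h1 j hj
    · exact h2 j hj
  · intro h
    exact ⟨fun j hj => h j (Or.inl hj), fun j hj => h j (Or.inr hj)⟩

lemma finrank_coordSub (n m : ℕ) (hm : m ≤ n) :
    Module.finrank ℂ (coordSub n {j | m ≤ j}) = m := by
  classical
  let f : EuclideanSpace ℂ (Fin n) →ₗ[ℂ] ({j : Fin n // m ≤ (j : ℕ)} → ℂ) :=
    { toFun := fun x j => x j.1
      map_add' := fun x y => rfl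
      map_smul' := fun c x => rfl }
  have hker : LinearMap.ker f = coordSub n {j | m ≤ j} := by
    ext x
    simp only [LinearMap.mem_ker, mem_coordSub]
    constructor
    · intro h j hj
      exact congrFun h ⟨j, hj⟩
    · intro h
      funext j
      exact h j.1 j.2
  have hsurj : Function.Surjective f := by
    intro g
    refine ⟨WithLp.toLp 2 (fun j => if h : m ≤ (j : ℕ) then g ⟨j, h⟩ else 0 : Fin n → ℂ), ?_⟩
    funext j
    show (if h : m ≤ (j.1 : ℕ) then g ⟨j.1, h⟩ else 0) = g j
    rw [dif_pos j.2]
  have hcard : Fintype.card {j : Fin n // m ≤ (j : ℕ)} = n - m := by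
    have e : {j : Fin n // m ≤ (j : ℕ)} ≃ Fin (n - m) :=
      { toFun := fun j => ⟨(j : ℕ) - m, by have := j.1.isLt; omega⟩
        invFun := fun i => ⟨⟨(i : ℕ) + m, by have := i.isLt; omega⟩, by simp⟩
        left_inv := by
          intro j
          ext
          have := j.2
          simp
          omega
        right_inv := by
          intro i
          ext
          simp }
    rw [Fintype.card_congr e, Fintype.card_fin]
  have h1 := LinearMap.finrank_range_add_finrank_ker f
  rw [hker] at h1
  have h2 : Module.finrank ℂ (LinearMap.range f) = n - m := by
    rw [LinearMap.range_eq_top.mpr hsurj, finrank_top, Module.finrank_pi, hcard]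
  have h3 : Module.finrank ℂ (EuclideanSpace ℂ (Fin n)) = n := finrank_euclideanSpace_fin
  rw [h2, h3] at h1
  omega

lemma mul_omegaInvZero_apply {N k Nt : ℕ} (S : Matrix (Fin N) (Fin k) ℂ) (ω : ℕ → ℂ)
    (i : Fin N) (j : Fin Nt) :
    (S * OmegaInvZero k Nt ω) i j =
      if h : (j : ℕ) < k then S i ⟨j, h⟩ * (ω (j : ℕ))⁻¹ else 0 := by
  rw [Matrix.mul_apply]
  split_ifs with h
  · rw [Finset.sum_eq_single (⟨(j : ℕ), h⟩ : Fin k)]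
    · simp [OmegaInvZero]
    · intro l _ hl
      have hne : (j : ℕ) ≠ (l : ℕ) := by
        intro e
        exact hl (by ext; simp [← e])
      simp [OmegaInvZero, hne]
    · simp
  · apply Finset.sum_eq_zero
    intro l _
    have hne : (j : ℕ) ≠ (l : ℕ) := by
      have := l.isLt; omega
    simp [OmegaInvZero, hne]

lemma mem_ker_iff {a c : ℕ} (M : Matrix (Fin a) (Fin c) ℂ) (x : EuclideanSpace ℂ (Fin c)) :
    x ∈ LinearMap.ker (toEuclideanLin M) ↔ ∀ i : Fin a, ∑ j, M i j * x j = 0 := by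
  rw [LinearMap.mem_ker]
  constructor
  · intro h i
    have : toEuclideanLin M x i = (0 : EuclideanSpace ℂ (Fin a)) i := by rw [h]
    exact this
  · intro h
    ext i
    exact h i

lemma ker_ba (Nt Nr k r s : ℕ) (hrsk : r + s ≤ k) (hrsNr : r + s ≤ Nr)
    (ω : ℕ → ℂ) (hω : ∀ i < k, ω i ≠ 0) (b : ℕ → ℝ) (hb : ∀ p < s, b p ≠ 0) :
    LinearMap.ker (toEuclideanLin (SigmaBa Nr k r s b * OmegaInvZero k Nt ω)) =
      coordSub Nt {j | k - (r + s) ≤ j ∧ j < k} := by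
  ext x
  rw [mem_ker_iff, mem_coordSub]
  constructor
  · intro h j hj
    obtain ⟨hj1, hj2⟩ := hj
    set i : Fin Nr := ⟨(j : ℕ) + Nr - k, by omega⟩ with hi
    have hik : (i : ℕ) + k = (j : ℕ) + Nr := by simp [hi]; omega
    have hi2 : Nr - (r + s) ≤ (i : ℕ) := by simp [hi]; omega
    have hrow := h i
    rw [Finset.sum_eq_single j] at hrow
    · rw [mul_omegaInvZero_apply, dif_pos hj2] at hrow
      have hSne : SigmaBa Nr k r s b i ⟨(j:ℕ), hj2⟩ ≠ 0 := by
        rw [SigmaBa, Matrix.of_apply, if_pos ⟨hik, hi2⟩]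
        split_ifs with hcase
        · have : (i : ℕ) - (Nr - (r + s)) < s := by omega
          exact_mod_cast Complex.ofReal_ne_zero.mpr (hb _ this)
        · exact one_ne_zero
      have hωne : (ω (j : ℕ))⁻¹ ≠ 0 := inv_ne_zero (hω _ hj2)
      rcases mul_eq_zero.mp hrow with h' | h'
      · exact absurd h' (mul_ne_zero hSne hωne)
      · exact h'
    · intro j' _ hj'
      rw [mul_omegaInvZero_apply]
      split_ifs with h'
      · have hS0 : SigmaBa Nr k r s b i ⟨(j':ℕ), h'⟩ = 0 := by
          rw [SigmaBa, Matrix.of_apply, if_neg]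
          rintro ⟨e, _⟩
          simp only [Fin.val_mk] at e
          exact hj' (by ext; omega)
        rw [hS0, zero_mul, zero_mul]
      · rw [zero_mul]
    · intro hj'
      exact absurd (Finset.mem_univ j) hj'
  · intro h i
    apply Finset.sum_eq_zero
    intro j _
    rw [mul_omegaInvZero_apply]
    split_ifs with h'
    · by_cases hc : (i : ℕ) + k = (j : ℕ) + Nr ∧ Nr - (r + s) ≤ (i : ℕ)
      · have hxj : x j = 0 := by
          apply h
          constructor
          · have := i.isLt; omega
          · exact h'
        rw [hxj, mul_zero]
      · have hS0 : SigmaBa Nr k r s b i ⟨(j:ℕ), h'⟩ = 0 := by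
          rw [SigmaBa, Matrix.of_apply, if_neg]
          simpa using hc
        rw [hS0, zero_mul, zero_mul]
    · rw [zero_mul]

lemma ker_ea (Nt Ne k r s : ℕ) (hrsk : r + s ≤ k) (hkrNe : k - r ≤ Ne)
    (ω : ℕ → ℂ) (hω : ∀ i < k, ω i ≠ 0) (e : ℕ → ℝ) (he : ∀ p < s, e p ≠ 0) :
    LinearMap.ker (toEuclideanLin (SigmaEa Ne k r s e * OmegaInvZero k Nt ω)) =
      coordSub Nt {j | j < k - r} := by
  ext x
  rw [mem_ker_iff, mem_coordSub]
  constructor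
  · intro h j hj
    have hj2 : (j : ℕ) < k - r := hj
    have hjk : (j : ℕ) < k := by omega
    have hjNe : (j : ℕ) < Ne := by omega
    have hrow := h ⟨(j : ℕ), hjNe⟩
    rw [Finset.sum_eq_single j] at hrow
    · rw [mul_omegaInvZero_apply, dif_pos hjk] at hrow
      have hSne : SigmaEa Ne k r s e ⟨(j:ℕ), hjNe⟩ ⟨(j:ℕ), hjk⟩ ≠ 0 := by
        rw [SigmaEa, Matrix.of_apply, if_pos]
        · split_ifs with hcase
          · exact one_ne_zero
          · simp only [Fin.val_mk] at hcase ⊢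
            exact_mod_cast Complex.ofReal_ne_zero.mpr (he _ (by omega))
        · exact ⟨rfl, by simp only [Fin.val_mk]; omega⟩
      have hωne : (ω (j : ℕ))⁻¹ ≠ 0 := inv_ne_zero (hω _ hjk)
      rcases mul_eq_zero.mp hrow with h' | h'
      · exact absurd h' (mul_ne_zero hSne hωne)
      · exact h'
    · intro j' _ hj'
      rw [mul_omegaInvZero_apply]
      split_ifs with h'
      · have hS0 : SigmaEa Ne k r s e ⟨(j:ℕ), hjNe⟩ ⟨(j':ℕ), h'⟩ = 0 := by
          rw [SigmaEa, Matrix.of_apply, if_neg]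
          rintro ⟨heq, _⟩
          simp only [Fin.val_mk] at heq
          exact hj' (by ext; omega)
        rw [hS0, zero_mul, zero_mul]
      · rw [zero_mul]
    · intro hj'
      exact absurd (Finset.mem_univ j) hj'
  · intro h i
    apply Finset.sum_eq_zero
    intro j _
    rw [mul_omegaInvZero_apply]
    split_ifs with h'
    · by_cases hc : (i : ℕ) = (j : ℕ) ∧ (i : ℕ) < k - r
      · have hxj : x j = 0 := by
          apply h
          show (j : ℕ) < k - r
          omega
        rw [hxj, mul_zero]
      · have hS0 : SigmaEa Ne k r s e i ⟨(j:ℕ), h'⟩ = 0 := by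
          rw [SigmaEa, Matrix.of_apply, if_neg]
          simpa using hc
        rw [hS0, zero_mul, zero_mul]
    · rw [zero_mul]

lemma toEuclideanLin_mul' {a c d : ℕ} (A : Matrix (Fin a) (Fin c) ℂ) (B : Matrix (Fin c) (Fin d) ℂ) :
    toEuclideanLin (A * B) = (toEuclideanLin A).comp (toEuclideanLin B) := by
  apply LinearMap.ext
  intro x
  ext i
  show ∑ j, (A * B) i j * x j = ∑ l, A i l * (∑ j, B l j * x j)
  simp only [Matrix.mul_apply, Finset.sum_mul, Finset.mul_sum, mul_assoc]
  exact Finset.sum_comm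

lemma toEuclideanLin_one' {n : ℕ} :
    toEuclideanLin (1 : Matrix (Fin n) (Fin n) ℂ) = LinearMap.id := by
  apply LinearMap.ext
  intro x
  ext i
  show ∑ j, (1 : Matrix (Fin n) (Fin n) ℂ) i j * x j = x i
  simp [Matrix.one_apply]

/-- The linear isometry equivalence of `EuclideanSpace ℂ (Fin n)` induced by a unitary matrix. -/
noncomputable def unitaryIso {n : ℕ} (U : Matrix (Fin n) (Fin n) ℂ)
    (hU : U ∈ Matrix.unitaryGroup (Fin n) ℂ) :
    EuclideanSpace ℂ (Fin n) ≃ₗᵢ[ℂ] EuclideanSpace ℂ (Fin n) :=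
  LinearEquiv.isometryOfInner
    (LinearEquiv.ofLinear (toEuclideanLin U) (toEuclideanLin Uᴴ)
      (by
        rw [← toEuclideanLin_mul', ← Matrix.star_eq_conjTranspose,
          Matrix.mem_unitaryGroup_iff.mp hU, toEuclideanLin_one'])
      (by
        rw [← toEuclideanLin_mul', ← Matrix.star_eq_conjTranspose,
          Matrix.mem_unitaryGroup_iff'.mp hU, toEuclideanLin_one']))
    (by
      intro x y
      show inner ℂ (toEuclideanLin U x) (toEuclideanLin U y) = inner ℂ x y
      rw [← LinearMap.adjoint_inner_right, ← Matrix.toEuclideanLin_conjTranspose_eq_adjoint,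
        ← LinearMap.comp_apply, ← toEuclideanLin_mul', ← Matrix.star_eq_conjTranspose,
        Matrix.mem_unitaryGroup_iff'.mp hU, toEuclideanLin_one', LinearMap.id_apply])

lemma ker_conj {m n : ℕ} (V : Matrix (Fin m) (Fin m) ℂ) (U : Matrix (Fin n) (Fin n) ℂ)
    (hV : V ∈ Matrix.unitaryGroup (Fin m) ℂ) (hU : U ∈ Matrix.unitaryGroup (Fin n) ℂ)
    (N : Matrix (Fin m) (Fin n) ℂ) :
    LinearMap.ker (toEuclideanLin (V * N * Uᴴ)) =
      (LinearMap.ker (toEuclideanLin N)).map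
        ((unitaryIso U hU).toLinearEquiv : EuclideanSpace ℂ (Fin n) →ₗ[ℂ] EuclideanSpace ℂ (Fin n)) := by
  ext x
  rw [Submodule.mem_map_equiv, LinearMap.mem_ker, LinearMap.mem_ker]
  have h1 : toEuclideanLin (V * N * Uᴴ) x
      = toEuclideanLin V (toEuclideanLin N (toEuclideanLin Uᴴ x)) := by
    rw [toEuclideanLin_mul', toEuclideanLin_mul']
    rfl
  rw [h1]
  have h2 : ∀ w, toEuclideanLin V w = 0 ↔ w = 0 := fun w =>
    (unitaryIso V hV).map_eq_zero_iff
  rw [h2]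
  rfl

lemma map_iso_orthogonal {E : Type*} [NormedAddCommGroup E] [InnerProductSpace ℂ E]
    (f : E ≃ₗᵢ[ℂ] E) (W : Submodule ℂ E) :
    (W.map (f.toLinearEquiv : E →ₗ[ℂ] E))ᗮ = Wᗮ.map (f.toLinearEquiv : E →ₗ[ℂ] E) := by
  ext x
  rw [Submodule.mem_map_equiv, Submodule.mem_orthogonal, Submodule.mem_orthogonal]
  constructor
  · intro h w hw
    have h2 := h (f w) (Submodule.mem_map.mpr ⟨w, hw, rfl⟩)
    rw [← f.apply_symm_apply x, f.inner_map_map] at h2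
    exact h2
  · intro h u hu
    rcases Submodule.mem_map.mp hu with ⟨w, hw, rfl⟩
    show inner ℂ (f w) x = (0 : ℂ)
    rw [← f.apply_symm_apply x, f.inner_map_map]
    exact h w hw

/-- Under the GSVD structure, `dim_ℂ S_ea = k − r − s` where `S_ea = ker H_ba ⊓ (ker H_ea)^⊥`. -/
theorem finrank_S_ea (Nt Nr Ne k r s : ℕ)
    (hNt : 0 < Nt) (hNr : 0 < Nr) (hNe : 0 < Ne)
    (hrsk : r + s ≤ k) (hkNt : k ≤ Nt) (hrsNr : r + s ≤ Nr) (hkrNe : k - r ≤ Ne)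
    (Ua : Matrix (Fin Nt) (Fin Nt) ℂ) (Uba : Matrix (Fin Nr) (Fin Nr) ℂ)
    (Uea : Matrix (Fin Ne) (Fin Ne) ℂ)
    (hUa : Ua ∈ Matrix.unitaryGroup (Fin Nt) ℂ)
    (hUba : Uba ∈ Matrix.unitaryGroup (Fin Nr) ℂ)
    (hUea : Uea ∈ Matrix.unitaryGroup (Fin Ne) ℂ)
    (ω : ℕ → ℂ) (hω : ∀ i < k, ω i ≠ 0)
    (b e : ℕ → ℝ)
    (hb : ∀ p < s, 0 < b p ∧ b p < 1) (he : ∀ p < s, 0 < e p ∧ e p < 1)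
    (hbe : ∀ p < s, b p ^ 2 + e p ^ 2 = 1)
    (Hba : Matrix (Fin Nr) (Fin Nt) ℂ) (Hea : Matrix (Fin Ne) (Fin Nt) ℂ)
    (hHba : Hba = Uba * SigmaBa Nr k r s b * OmegaInvZero k Nt ω * Uaᴴ)
    (hHea : Hea = Uea * SigmaEa Ne k r s e * OmegaInvZero k Nt ω * Uaᴴ) :
    Module.finrank ℂ ↥(LinearMap.ker (Matrix.toEuclideanLin Hba) ⊓ (LinearMap.ker (Matrix.toEuclideanLin Hea))ᗮ) = k - r - s := by
  classical
  have hbne : ∀ p < s, b p ≠ 0 := fun p hp => ne_of_gt (hb p hp).1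
  have hene : ∀ p < s, e p ≠ 0 := fun p hp => ne_of_gt (he p hp).1
  have hba2 : Hba = Uba * (SigmaBa Nr k r s b * OmegaInvZero k Nt ω) * Uaᴴ := by
    rw [hHba, Matrix.mul_assoc Uba]
  have hea2 : Hea = Uea * (SigmaEa Ne k r s e * OmegaInvZero k Nt ω) * Uaᴴ := by
    rw [hHea, Matrix.mul_assoc Uea]
  rw [hba2, hea2, ker_conj Uba Ua hUba hUa, ker_conj Uea Ua hUea hUa,
    ker_ba Nt Nr k r s hrsk hrsNr ω hω b hbne,
    ker_ea Nt Ne k r s hrsk hkrNe ω hω e hene,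
    map_iso_orthogonal (unitaryIso Ua hUa), coordSub_orthogonal,
    ← Submodule.map_inf ((unitaryIso Ua hUa).toLinearEquiv :
        EuclideanSpace ℂ (Fin Nt) →ₗ[ℂ] EuclideanSpace ℂ (Fin Nt))
      (unitaryIso Ua hUa).toLinearEquiv.injective,
    coordSub_inf]
  have hset : ({j | k - (r + s) ≤ j ∧ j < k} ∪ {j | j < k - r}ᶜ) = {j | k - (r + s) ≤ j} := by
    ext j
    simp only [Set.mem_union, Set.mem_setOf_eq, Set.mem_compl_iff, not_lt]
    omega
  rw [hset, LinearEquiv.finrank_map_eq, finrank_coordSub Nt (k - (r + s)) (by omega)]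
  omega
end

section
/- Under the GSVD structure, the subspaces S_ba and S_be together span the orthogonal complement of the kernel of H_ba: S_ba + S_be = (ker H_ba)^⊥ (as subspaces of ℂ^{N_t}). -/
open Matrix

open scoped InnerProductSpace ComplexConjugate

namespace GsvdAux
variable {n : ℕ}

variable {n : ℕ}

def Vsp (n : ℕ) (S : Set (Fin n)) : Submodule ℂ (EuclideanSpace ℂ (Fin n)) where
  carrier := {x | ∀ i ∈ S, x i = 0}
  add_mem' := fun {a b} ha hb i hi => by
    have h : (a + b) i = a i + b i := rfl
    rw [h, ha i hi, hb i hi, add_zero]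
  zero_mem' := fun i _ => rfl
  smul_mem' := fun c a ha i hi => by
    have h : (c • a) i = c * a i := rfl
    rw [h, ha i hi, mul_zero]

@[simp] lemma mem_Vsp {S : Set (Fin n)} {x : EuclideanSpace ℂ (Fin n)} :
    x ∈ Vsp n S ↔ ∀ i ∈ S, x i = 0 := Iff.rfl

lemma Vsp_anti {S T : Set (Fin n)} (h : S ⊆ T) : Vsp n T ≤ Vsp n S :=
  fun _ hx i hi => hx i (h hi)

lemma Vsp_inf (S T : Set (Fin n)) : Vsp n S ⊓ Vsp n T = Vsp n (S ∪ T) := by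
  ext x
  simp only [Submodule.mem_inf, mem_Vsp, Set.mem_union]
  constructor
  · rintro ⟨h1, h2⟩ i (hi | hi)
    exacts [h1 i hi, h2 i hi]
  · intro h
    exact ⟨fun i hi => h i (Or.inl hi), fun i hi => h i (Or.inr hi)⟩

lemma Vsp_orth (S : Set (Fin n)) : (Vsp n S)ᗮ = Vsp n Sᶜ := by
  ext x
  rw [Submodule.mem_orthogonal]
  constructor
  · intro h i hi
    have hs : EuclideanSpace.single i (1:ℂ) ∈ Vsp n S := by
      intro j hj
      rw [EuclideanSpace.single_apply, if_neg]
      intro hji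
      exact hi (hji ▸ hj)
    have h0 := h _ hs
    rwa [EuclideanSpace.inner_single_left, _root_.map_one, one_mul] at h0
  · intro h y hy
    rw [PiLp.inner_apply]
    refine Finset.sum_eq_zero fun i _ => ?_
    by_cases hi : i ∈ S
    · rw [hy i hi]; simp
    · rw [h i hi]; simp

lemma Vsp_key (S T : Set (Fin n)) : Vsp n (S ∪ T) ⊔ Vsp n (S ∪ Tᶜ) = Vsp n S := by
  classical
  apply le_antisymm
  · exact sup_le (Vsp_anti Set.subset_union_left) (Vsp_anti Set.subset_union_left)
  · intro x hx
    set x₁ : EuclideanSpace ℂ (Fin n) :=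
      (WithLp.equiv 2 (Fin n → ℂ)).symm (fun i => if i ∈ T then 0 else x i) with hx₁def
    set x₂ : EuclideanSpace ℂ (Fin n) :=
      (WithLp.equiv 2 (Fin n → ℂ)).symm (fun i => if i ∈ T then x i else 0) with hx₂def
    have h₁ : x₁ ∈ Vsp n (S ∪ T) := by
      intro i hi
      rw [hx₁def, WithLp.equiv_symm_apply, PiLp.toLp_apply]
      rcases hi with hi | hi
      · by_cases hT : i ∈ T
        · rw [if_pos hT]
        · rw [if_neg hT]; exact hx i hi
      · rw [if_pos hi]
    have h₂ : x₂ ∈ Vsp n (S ∪ Tᶜ) := by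
      intro i hi
      rw [hx₂def, WithLp.equiv_symm_apply, PiLp.toLp_apply]
      rcases hi with hi | hi
      · by_cases hT : i ∈ T
        · rw [if_pos hT]; exact hx i hi
        · rw [if_neg hT]
      · rw [if_neg hi]
    have hsum : x = x₁ + x₂ := by
      ext i
      have h : (x₁ + x₂) i = x₁ i + x₂ i := rfl
      rw [h, hx₁def, hx₂def, WithLp.equiv_symm_apply, PiLp.toLp_apply, PiLp.toLp_apply]
      by_cases hT : i ∈ T <;> simp [hT]
    rw [hsum]
    exact Submodule.add_mem_sup h₁ h₂

lemma comap_orthogonal {E : Type*} [NormedAddCommGroup E] [InnerProductSpace ℂ E]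
    (f : E ≃ₗ[ℂ] E) (hf : ∀ x y : E, ⟪f x, f y⟫_ℂ = ⟪x, y⟫_ℂ) (K : Submodule ℂ E) :
    (K.comap (f : E →ₗ[ℂ] E))ᗮ = Kᗮ.comap (f : E →ₗ[ℂ] E) := by
  ext x
  simp only [Submodule.mem_orthogonal, Submodule.mem_comap, LinearEquiv.coe_coe]
  constructor
  · intro h v hv
    have h0 := h (f.symm v) (by simpa using hv)
    rw [← hf, f.apply_symm_apply] at h0
    exact h0
  · intro h u hu
    have h0 := h (f u) hu
    rwa [hf] at h0



lemma mulVec_OmegaInvZero {k Nt : ℕ} (hkNt : k ≤ Nt) (ω : ℕ → ℂ) (z : Fin Nt → ℂ) (m : Fin k) :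
    (OmegaInvZero k Nt ω *ᵥ z) m = (ω (m : ℕ))⁻¹ * z ⟨m, lt_of_lt_of_le m.2 hkNt⟩ := by
  simp only [Matrix.mulVec, dotProduct, OmegaInvZero, Matrix.of_apply]
  rw [Finset.sum_eq_single (⟨(m : ℕ), lt_of_lt_of_le m.2 hkNt⟩ : Fin Nt)]
  · simp
  · intro j _ hj
    rw [if_neg, zero_mul]
    intro hc
    exact hj (Fin.ext hc)
  · intro hm
    exact absurd (Finset.mem_univ _) hm

lemma mulVec_SigmaBa_zero_iff {Nt Nr k r s : ℕ}
    (hrsk : r + s ≤ k) (hkNt : k ≤ Nt) (hrsNr : r + s ≤ Nr)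
    {ω : ℕ → ℂ} (hω : ∀ i < k, ω i ≠ 0) {b : ℕ → ℝ} (hb : ∀ p < s, 0 < b p)
    (z : Fin Nt → ℂ) :
    SigmaBa Nr k r s b *ᵥ (OmegaInvZero k Nt ω *ᵥ z) = 0 ↔
      ∀ j : Fin Nt, k - (r + s) ≤ (j : ℕ) → (j : ℕ) < k → z j = 0 := by
  have hv : ∀ m : Fin k, (OmegaInvZero k Nt ω *ᵥ z) m
      = (ω (m : ℕ))⁻¹ * z ⟨m, lt_of_lt_of_le m.2 hkNt⟩ := mulVec_OmegaInvZero hkNt ω z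
  set v : Fin k → ℂ := OmegaInvZero k Nt ω *ᵥ z with hvdef
  constructor
  · intro h j hj1 hj2
    have hiNr : (j : ℕ) + Nr - k < Nr := by omega
    have hrow := congrFun h (⟨(j : ℕ) + Nr - k, hiNr⟩ : Fin Nr)
    have hval : (SigmaBa Nr k r s b *ᵥ v) (⟨(j : ℕ) + Nr - k, hiNr⟩ : Fin Nr) =
        (if (j : ℕ) + Nr - k < Nr - r
          then ((b ((j : ℕ) + Nr - k - (Nr - (r + s))) : ℝ) : ℂ) else 1) *
          ((ω (j : ℕ))⁻¹ * z j) := by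
      simp only [Matrix.mulVec, dotProduct, SigmaBa, Matrix.of_apply]
      rw [Finset.sum_eq_single (⟨(j : ℕ), hj2⟩ : Fin k)]
      · rw [hv, if_pos]
        refine ⟨?_, ?_⟩
        · show (j : ℕ) + Nr - k + k = (j : ℕ) + Nr
          omega
        · show Nr - (r + s) ≤ (j : ℕ) + Nr - k
          omega
      · intro m _ hm
        rw [if_neg, zero_mul]
        rintro ⟨hc, -⟩
        apply hm
        apply Fin.ext
        have hc' : (j : ℕ) + Nr - k + k = (m : ℕ) + Nr := hc
        show (m : ℕ) = (j : ℕ)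
        omega
      · intro hm
        exact absurd (Finset.mem_univ _) hm
    rw [hval] at hrow
    have hc0 : (if (j : ℕ) + Nr - k < Nr - r
        then ((b ((j : ℕ) + Nr - k - (Nr - (r + s))) : ℝ) : ℂ) else 1) ≠ 0 := by
      split_ifs with hlt
      · simp only [ne_eq, Complex.ofReal_eq_zero]
        exact ne_of_gt (hb _ (by omega))
      · exact one_ne_zero
    have hω0 : (ω (j : ℕ))⁻¹ ≠ 0 := inv_ne_zero (hω _ hj2)
    rcases mul_eq_zero.mp hrow with h' | h'
    · exact absurd h' hc0
    · rcases mul_eq_zero.mp h' with h'' | h''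
      · exact absurd h'' hω0
      · exact h''
  · intro h
    funext i
    simp only [Matrix.mulVec, dotProduct, SigmaBa, Matrix.of_apply, Pi.zero_apply]
    refine Finset.sum_eq_zero fun m _ => ?_
    by_cases hc : (i : ℕ) + k = (m : ℕ) + Nr ∧ Nr - (r + s) ≤ (i : ℕ)
    · rw [hv]
      have hz : z ⟨(m : ℕ), lt_of_lt_of_le m.2 hkNt⟩ = 0 := by
        apply h
        · show k - (r + s) ≤ (m : ℕ)
          omega
        · show (m : ℕ) < k
          exact m.2
      rw [hz, mul_zero, mul_zero]
    · rw [if_neg hc, zero_mul]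

lemma mulVec_SigmaEa_zero_iff {Nt Ne k r s : ℕ}
    (hrsk : r + s ≤ k) (hkNt : k ≤ Nt) (hkrNe : k - r ≤ Ne)
    {ω : ℕ → ℂ} (hω : ∀ i < k, ω i ≠ 0) {e : ℕ → ℝ} (he : ∀ p < s, 0 < e p)
    (z : Fin Nt → ℂ) :
    SigmaEa Ne k r s e *ᵥ (OmegaInvZero k Nt ω *ᵥ z) = 0 ↔
      ∀ j : Fin Nt, (j : ℕ) < k - r → z j = 0 := by
  have hv : ∀ m : Fin k, (OmegaInvZero k Nt ω *ᵥ z) m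
      = (ω (m : ℕ))⁻¹ * z ⟨m, lt_of_lt_of_le m.2 hkNt⟩ := mulVec_OmegaInvZero hkNt ω z
  set v : Fin k → ℂ := OmegaInvZero k Nt ω *ᵥ z with hvdef
  constructor
  · intro h j hj
    have hjk : (j : ℕ) < k := by omega
    have hiNe : (j : ℕ) < Ne := by omega
    have hrow := congrFun h (⟨(j : ℕ), hiNe⟩ : Fin Ne)
    have hval : (SigmaEa Ne k r s e *ᵥ v) (⟨(j : ℕ), hiNe⟩ : Fin Ne) =
        (if (j : ℕ) < k - (r + s) then 1 else ((e ((j : ℕ) - (k - (r + s))) : ℝ) : ℂ)) *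
          ((ω (j : ℕ))⁻¹ * z j) := by
      simp only [Matrix.mulVec, dotProduct, SigmaEa, Matrix.of_apply]
      rw [Finset.sum_eq_single (⟨(j : ℕ), hjk⟩ : Fin k)]
      · rw [hv, if_pos]
        refine ⟨rfl, ?_⟩
        show (j : ℕ) < k - r
        omega
      · intro m _ hm
        rw [if_neg, zero_mul]
        rintro ⟨hc, -⟩
        apply hm
        apply Fin.ext
        have hc' : (j : ℕ) = (m : ℕ) := hc
        show (m : ℕ) = (j : ℕ)
        omega
      · intro hm
        exact absurd (Finset.mem_univ _) hm
    rw [hval] at hrow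
    have hc0 : (if (j : ℕ) < k - (r + s) then 1
        else ((e ((j : ℕ) - (k - (r + s))) : ℝ) : ℂ)) ≠ 0 := by
      split_ifs with hlt
      · exact one_ne_zero
      · simp only [ne_eq, Complex.ofReal_eq_zero]
        exact ne_of_gt (he _ (by omega))
    have hω0 : (ω (j : ℕ))⁻¹ ≠ 0 := inv_ne_zero (hω _ hjk)
    rcases mul_eq_zero.mp hrow with h' | h'
    · exact absurd h' hc0
    · rcases mul_eq_zero.mp h' with h'' | h''
      · exact absurd h'' hω0
      · exact h''
  · intro h
    funext i
    simp only [Matrix.mulVec, dotProduct, SigmaEa, Matrix.of_apply, Pi.zero_apply]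
    refine Finset.sum_eq_zero fun m _ => ?_
    by_cases hc : (i : ℕ) = (m : ℕ) ∧ (i : ℕ) < k - r
    · rw [hv]
      have hz : z ⟨(m : ℕ), lt_of_lt_of_le m.2 hkNt⟩ = 0 := by
        apply h
        show (m : ℕ) < k - r
        omega
      rw [hz, mul_zero, mul_zero]
    · rw [if_neg hc, zero_mul]


end GsvdAux

/-- Under the GSVD structure, `S_ba + S_be = (ker H_ba)^⊥`. -/
theorem S_ba_sup_S_be (Nt Nr Ne k r s : ℕ)
    (hNt : 0 < Nt) (hNr : 0 < Nr) (hNe : 0 < Ne)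
    (hrsk : r + s ≤ k) (hkNt : k ≤ Nt) (hrsNr : r + s ≤ Nr) (hkrNe : k - r ≤ Ne)
    (Ua : Matrix (Fin Nt) (Fin Nt) ℂ) (Uba : Matrix (Fin Nr) (Fin Nr) ℂ)
    (Uea : Matrix (Fin Ne) (Fin Ne) ℂ)
    (hUa : Ua ∈ Matrix.unitaryGroup (Fin Nt) ℂ)
    (hUba : Uba ∈ Matrix.unitaryGroup (Fin Nr) ℂ)
    (hUea : Uea ∈ Matrix.unitaryGroup (Fin Ne) ℂ)
    (ω : ℕ → ℂ) (hω : ∀ i < k, ω i ≠ 0)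
    (b e : ℕ → ℝ)
    (hb : ∀ p < s, 0 < b p ∧ b p < 1) (he : ∀ p < s, 0 < e p ∧ e p < 1)
    (hbe : ∀ p < s, b p ^ 2 + e p ^ 2 = 1)
    (Hba : Matrix (Fin Nr) (Fin Nt) ℂ) (Hea : Matrix (Fin Ne) (Fin Nt) ℂ)
    (hHba : Hba = Uba * SigmaBa Nr k r s b * OmegaInvZero k Nt ω * Uaᴴ)
    (hHea : Hea = Uea * SigmaEa Ne k r s e * OmegaInvZero k Nt ω * Uaᴴ) :
    ((LinearMap.ker (Matrix.toEuclideanLin Hba))ᗮ ⊓ LinearMap.ker (Matrix.toEuclideanLin Hea)) ⊔ ((LinearMap.ker (Matrix.toEuclideanLin Hba))ᗮ ⊓ (LinearMap.ker (Matrix.toEuclideanLin Hea))ᗮ) = (LinearMap.ker (Matrix.toEuclideanLin Hba))ᗮ := by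
  classical
  have hUa1 : Uaᴴ * Ua = 1 := by
    have h := Matrix.mem_unitaryGroup_iff'.mp hUa
    simpa [Matrix.star_eq_conjTranspose] using h
  have hUa2 : Ua * Uaᴴ = 1 := by
    have h := Matrix.mem_unitaryGroup_iff.mp hUa
    simpa [Matrix.star_eq_conjTranspose] using h
  have hUba1 : Ubaᴴ * Uba = 1 := by
    have h := Matrix.mem_unitaryGroup_iff'.mp hUba
    simpa [Matrix.star_eq_conjTranspose] using h
  have hUea1 : Ueaᴴ * Uea = 1 := by
    have h := Matrix.mem_unitaryGroup_iff'.mp hUea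
    simpa [Matrix.star_eq_conjTranspose] using h
  -- composition and identity facts for `toEuclideanLin`
  have hmul : ∀ {p q t : ℕ} (A : Matrix (Fin p) (Fin q) ℂ) (B : Matrix (Fin q) (Fin t) ℂ)
      (x : EuclideanSpace ℂ (Fin t)),
      Matrix.toEuclideanLin (A * B) x = Matrix.toEuclideanLin A (Matrix.toEuclideanLin B x) := by
    intro p q t A B x
    simp [Matrix.toEuclideanLin_apply, Equiv.apply_symm_apply, Matrix.mulVec_mulVec]
  have hid : ∀ {p : ℕ} (x : EuclideanSpace ℂ (Fin p)),
      Matrix.toEuclideanLin (1 : Matrix (Fin p) (Fin p) ℂ) x = x := by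
    intro p x
    simp [Matrix.toEuclideanLin_apply, Matrix.one_mulVec]
  -- the unitary change of coordinates
  set eL : EuclideanSpace ℂ (Fin Nt) ≃ₗ[ℂ] EuclideanSpace ℂ (Fin Nt) :=
    LinearEquiv.ofLinear (Matrix.toEuclideanLin Uaᴴ) (Matrix.toEuclideanLin Ua)
      (by
        apply LinearMap.ext
        intro x
        simp only [LinearMap.comp_apply, LinearMap.id_apply]
        rw [← hmul, hUa1, hid])
      (by
        apply LinearMap.ext
        intro x
        simp only [LinearMap.comp_apply, LinearMap.id_apply]
        rw [← hmul, hUa2, hid]) with heLdef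
  have heLapp : ∀ (x : EuclideanSpace ℂ (Fin Nt)) (i : Fin Nt),
      eL x i = (Uaᴴ *ᵥ (WithLp.equiv 2 (Fin Nt → ℂ) x)) i := by
    intro x i
    rw [heLdef]
    rw [show (LinearEquiv.ofLinear (Matrix.toEuclideanLin Uaᴴ) (Matrix.toEuclideanLin Ua) _ _) x
        = Matrix.toEuclideanLin Uaᴴ x from rfl]
    rw [Matrix.toEuclideanLin_apply, PiLp.toLp_apply]
    rfl
  have hinner : ∀ x y : EuclideanSpace ℂ (Fin Nt), ⟪eL x, eL y⟫_ℂ = ⟪x, y⟫_ℂ := by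
    intro x y
    have hadj : Matrix.toEuclideanLin (Uaᴴ) = LinearMap.adjoint (Matrix.toEuclideanLin Ua) :=
      Matrix.toEuclideanLin_conjTranspose_eq_adjoint Ua
    have hx : eL x = Matrix.toEuclideanLin Uaᴴ x := rfl
    have hy : eL y = Matrix.toEuclideanLin Uaᴴ y := rfl
    rw [hx, hy]
    nth_rewrite 1 [hadj]
    rw [LinearMap.adjoint_inner_left, ← hmul, hUa2, hid]
  -- zero test through the `WithLp` equivalence
  have hzero : ∀ {p : ℕ} (w : Fin p → ℂ),
      (WithLp.equiv 2 (Fin p → ℂ)).symm w = 0 ↔ w = 0 := by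
    intro p w
    constructor
    · intro h0
      have h1 := congrArg (WithLp.equiv 2 (Fin p → ℂ)) h0
      simpa using h1
    · intro h0
      rw [h0]
      simp
  have hUbainj : ∀ w : Fin Nr → ℂ, Uba *ᵥ w = 0 ↔ w = 0 := by
    intro w
    constructor
    · intro h0
      have h1 := congrArg (fun u => Ubaᴴ *ᵥ u) h0
      simpa [Matrix.mulVec_mulVec, hUba1, Matrix.one_mulVec, Matrix.mulVec_zero] using h1
    · intro h0
      rw [h0, Matrix.mulVec_zero]
  have hUeainj : ∀ w : Fin Ne → ℂ, Uea *ᵥ w = 0 ↔ w = 0 := by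
    intro w
    constructor
    · intro h0
      have h1 := congrArg (fun u => Ueaᴴ *ᵥ u) h0
      simpa [Matrix.mulVec_mulVec, hUea1, Matrix.one_mulVec, Matrix.mulVec_zero] using h1
    · intro h0
      rw [h0, Matrix.mulVec_zero]
  -- kernel identifications
  have hkerba : LinearMap.ker (Matrix.toEuclideanLin Hba)
      = (GsvdAux.Vsp Nt {j : Fin Nt | k - (r + s) ≤ (j : ℕ) ∧ (j : ℕ) < k}).comap
          (eL : EuclideanSpace ℂ (Fin Nt) →ₗ[ℂ] EuclideanSpace ℂ (Fin Nt)) := by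
    ext x
    simp only [LinearMap.mem_ker, Submodule.mem_comap, LinearEquiv.coe_coe, GsvdAux.mem_Vsp,
      Set.mem_setOf_eq]
    rw [hHba, Matrix.toEuclideanLin_apply]
    erw [hzero]
    rw [show (Uba * SigmaBa Nr k r s b * OmegaInvZero k Nt ω * Uaᴴ)
          *ᵥ x.ofLp
        = Uba *ᵥ (SigmaBa Nr k r s b *ᵥ (OmegaInvZero k Nt ω *ᵥ
            (Uaᴴ *ᵥ x.ofLp))) from by
      rw [Matrix.mulVec_mulVec, Matrix.mulVec_mulVec, Matrix.mulVec_mulVec]]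
    rw [hUbainj, GsvdAux.mulVec_SigmaBa_zero_iff hrsk hkNt hrsNr hω (fun p hp => (hb p hp).1)]
    constructor
    · intro h i hi
      rw [heLapp]
      exact h i hi.1 hi.2
    · intro h j hj1 hj2
      have := h j ⟨hj1, hj2⟩
      rwa [heLapp] at this
  have hkerea : LinearMap.ker (Matrix.toEuclideanLin Hea)
      = (GsvdAux.Vsp Nt {j : Fin Nt | (j : ℕ) < k - r}).comap
          (eL : EuclideanSpace ℂ (Fin Nt) →ₗ[ℂ] EuclideanSpace ℂ (Fin Nt)) := by
    ext x
    simp only [LinearMap.mem_ker, Submodule.mem_comap, LinearEquiv.coe_coe, GsvdAux.mem_Vsp,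
      Set.mem_setOf_eq]
    rw [hHea, Matrix.toEuclideanLin_apply]
    erw [hzero]
    rw [show (Uea * SigmaEa Ne k r s e * OmegaInvZero k Nt ω * Uaᴴ)
          *ᵥ x.ofLp
        = Uea *ᵥ (SigmaEa Ne k r s e *ᵥ (OmegaInvZero k Nt ω *ᵥ
            (Uaᴴ *ᵥ x.ofLp))) from by
      rw [Matrix.mulVec_mulVec, Matrix.mulVec_mulVec, Matrix.mulVec_mulVec]]
    rw [hUeainj, GsvdAux.mulVec_SigmaEa_zero_iff hrsk hkNt hkrNe hω (fun p hp => (he p hp).1)]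
    constructor
    · intro h i hi
      rw [heLapp]
      exact h i hi
    · intro h j hj
      have := h j hj
      rwa [heLapp] at this
  -- reduce to a statement about coordinate subspaces
  have hsupc : ∀ X Y : Submodule ℂ (EuclideanSpace ℂ (Fin Nt)),
      X.comap (eL : EuclideanSpace ℂ (Fin Nt) →ₗ[ℂ] EuclideanSpace ℂ (Fin Nt))
        ⊔ Y.comap (eL : EuclideanSpace ℂ (Fin Nt) →ₗ[ℂ] EuclideanSpace ℂ (Fin Nt))
      = (X ⊔ Y).comap (eL : EuclideanSpace ℂ (Fin Nt) →ₗ[ℂ] EuclideanSpace ℂ (Fin Nt)) := by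
    intro X Y
    rw [Submodule.comap_equiv_eq_map_symm, Submodule.comap_equiv_eq_map_symm,
      Submodule.comap_equiv_eq_map_symm, Submodule.map_sup]
  rw [hkerba, hkerea, GsvdAux.comap_orthogonal eL hinner, GsvdAux.comap_orthogonal eL hinner,
    ← Submodule.comap_inf, ← Submodule.comap_inf, hsupc]
  refine congrArg _ ?_
  rw [GsvdAux.Vsp_orth, GsvdAux.Vsp_orth, GsvdAux.Vsp_inf, GsvdAux.Vsp_inf]
  exact GsvdAux.Vsp_key _ _
end

section
/- Under the GSVD structure, the subspaces S_ba and S_n together span the kernel of H_ea: S_ba + S_n = ker H_ea (as subspaces of ℂ^{N_t}). -/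
open Matrix

section Aux
open Matrix

lemma unitary_mulVec_eq_zero_iff {n : Type*} [Fintype n] [DecidableEq n]
    {U : Matrix n n ℂ} (hU : U ∈ Matrix.unitaryGroup n ℂ) (w : n → ℂ) :
    U *ᵥ w = 0 ↔ w = 0 := by
  constructor
  · intro h
    have h1 : Uᴴ * U = 1 := by simpa [Matrix.star_eq_conjTranspose] using hU.1
    calc w = (Uᴴ * U) *ᵥ w := by rw [h1, Matrix.one_mulVec]
    _ = Uᴴ *ᵥ (U *ᵥ w) := (Matrix.mulVec_mulVec ..).symm
    _ = 0 := by rw [h, Matrix.mulVec_zero]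
  · intro h; rw [h, Matrix.mulVec_zero]

lemma omega_mulVec {k Nt : ℕ} (hkNt : k ≤ Nt) (ω : ℕ → ℂ) (y : Fin Nt → ℂ) (i : Fin k) :
    (OmegaInvZero k Nt ω *ᵥ y) i = (ω (i : ℕ))⁻¹ * y ⟨i, lt_of_lt_of_le i.2 hkNt⟩ := by
  rw [Matrix.mulVec, dotProduct]
  rw [Finset.sum_eq_single (⟨(i : ℕ), lt_of_lt_of_le i.2 hkNt⟩ : Fin Nt)]
  · simp [OmegaInvZero]
  · intro m _ hm
    have : (m : ℕ) ≠ (i : ℕ) := fun h => hm (Fin.ext h)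
    simp [OmegaInvZero, this]
  · simp

lemma sigmaEa_omega_mulVec_eq_zero {Nt Ne k r s : ℕ}
    (hrsk : r + s ≤ k) (hkNt : k ≤ Nt) (hkrNe : k - r ≤ Ne)
    (ω : ℕ → ℂ) (hω : ∀ i < k, ω i ≠ 0) (e : ℕ → ℝ) (he : ∀ p < s, 0 < e p ∧ e p < 1)
    (y : Fin Nt → ℂ) :
    SigmaEa Ne k r s e *ᵥ (OmegaInvZero k Nt ω *ᵥ y) = 0 ↔
      ∀ j : Fin Nt, (j : ℕ) < k - r → y j = 0 := by
  have key : ∀ i : Fin Ne, (hi : (i : ℕ) < k - r) →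
      (SigmaEa Ne k r s e *ᵥ (OmegaInvZero k Nt ω *ᵥ y)) i =
        (if (i : ℕ) < k - (r + s) then 1 else ((e ((i : ℕ) - (k - (r + s))) : ℝ) : ℂ)) *
          ((ω (i : ℕ))⁻¹ * y ⟨(i : ℕ), by omega⟩) := by
    intro i hi
    have hik : (i : ℕ) < k := by omega
    rw [Matrix.mulVec, dotProduct]
    rw [Finset.sum_eq_single (⟨(i : ℕ), hik⟩ : Fin k)]
    · rw [omega_mulVec hkNt]
      simp [SigmaEa, hi]
    · intro m _ hm
      have : (i : ℕ) ≠ (m : ℕ) := fun h => hm (Fin.ext h.symm)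
      simp [SigmaEa, this]
    · simp
  have zeroRow : ∀ i : Fin Ne, ¬ ((i : ℕ) < k - r) →
      (SigmaEa Ne k r s e *ᵥ (OmegaInvZero k Nt ω *ᵥ y)) i = 0 := by
    intro i hi
    rw [Matrix.mulVec, dotProduct]
    apply Finset.sum_eq_zero
    intro m _
    simp [SigmaEa, hi]
  constructor
  · intro h j hj
    have hjNe : (j : ℕ) < Ne := by omega
    have := congrFun h (⟨(j : ℕ), hjNe⟩ : Fin Ne)
    rw [key _ (by simpa using hj)] at this
    have hc : (if ((j : ℕ) : ℕ) < k - (r + s) then (1 : ℂ)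
        else ((e (((j : ℕ)) - (k - (r + s))) : ℝ) : ℂ)) ≠ 0 := by
      split_ifs with h'
      · exact one_ne_zero
      · have hp : (j : ℕ) - (k - (r + s)) < s := by omega
        exact_mod_cast ne_of_gt (he _ hp).1
    have hwinv : (ω ((j : ℕ)))⁻¹ ≠ 0 := inv_ne_zero (hω _ (by omega))
    have hy : y ⟨(j : ℕ), by omega⟩ = 0 := by
      rcases mul_eq_zero.mp this with h' | h'
      · exact absurd h' hc
      · rcases mul_eq_zero.mp h' with h'' | h''
        · exact absurd h'' hwinv
        · exact h''
    simpa using hy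
  · intro h
    funext i
    by_cases hi : (i : ℕ) < k - r
    · rw [key i hi, h _ (by simpa using hi), mul_zero, mul_zero]
      rfl
    · rw [zeroRow i hi]; rfl

lemma sigmaBa_omega_mulVec_eq_zero {Nt Nr k r s : ℕ}
    (hrsk : r + s ≤ k) (hkNt : k ≤ Nt) (hrsNr : r + s ≤ Nr)
    (ω : ℕ → ℂ) (hω : ∀ i < k, ω i ≠ 0) (b : ℕ → ℝ) (hb : ∀ p < s, 0 < b p ∧ b p < 1)
    (y : Fin Nt → ℂ) :
    SigmaBa Nr k r s b *ᵥ (OmegaInvZero k Nt ω *ᵥ y) = 0 ↔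
      ∀ j : Fin Nt, k - (r + s) ≤ (j : ℕ) → (j : ℕ) < k → y j = 0 := by
  have key : ∀ i : Fin Nr, (hi : Nr - (r + s) ≤ (i : ℕ)) →
      (SigmaBa Nr k r s b *ᵥ (OmegaInvZero k Nt ω *ᵥ y)) i =
        (if (i : ℕ) < Nr - r then ((b ((i : ℕ) - (Nr - (r + s))) : ℝ) : ℂ) else 1) *
          ((ω ((i : ℕ) + k - Nr))⁻¹ * y ⟨(i : ℕ) + k - Nr, by omega⟩) := by
    intro i hi
    have hiNr : (i : ℕ) < Nr := i.2
    have hjk : (i : ℕ) + k - Nr < k := by omega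
    rw [Matrix.mulVec, dotProduct]
    rw [Finset.sum_eq_single (⟨(i : ℕ) + k - Nr, hjk⟩ : Fin k)]
    · rw [omega_mulVec hkNt]
      have hcond : (i : ℕ) + k = ((i : ℕ) + k - Nr) + Nr := by omega
      simp only [SigmaBa, Matrix.of_apply]
      rw [if_pos ⟨hcond, hi⟩]
    · intro m _ hm
      have : (i : ℕ) + k ≠ (m : ℕ) + Nr := by
        intro h
        apply hm
        apply Fin.ext
        simp only
        omega
      simp [SigmaBa, this]
    · simp
  have zeroRow : ∀ i : Fin Nr, ¬ (Nr - (r + s) ≤ (i : ℕ)) →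
      (SigmaBa Nr k r s b *ᵥ (OmegaInvZero k Nt ω *ᵥ y)) i = 0 := by
    intro i hi
    rw [Matrix.mulVec, dotProduct]
    apply Finset.sum_eq_zero
    intro m _
    have h2 : ¬ ((i : ℕ) + k = (m : ℕ) + Nr ∧ Nr - (r + s) ≤ (i : ℕ)) := fun h => hi h.2
    simp only [SigmaBa, Matrix.of_apply]
    rw [if_neg h2, zero_mul]
  constructor
  · intro h j hj1 hj2
    have hiNr : (j : ℕ) + Nr - k < Nr := by omega
    set i : Fin Nr := ⟨(j : ℕ) + Nr - k, hiNr⟩ with hidef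
    have hi : Nr - (r + s) ≤ (i : ℕ) := by simp [hidef]; omega
    have := congrFun h i
    rw [key i hi] at this
    have hval : (i : ℕ) + k - Nr = (j : ℕ) := by simp [hidef]; omega
    have hc : (if (i : ℕ) < Nr - r then ((b ((i : ℕ) - (Nr - (r + s))) : ℝ) : ℂ) else 1) ≠ 0 := by
      split_ifs with h'
      · have hp : (i : ℕ) - (Nr - (r + s)) < s := by omega
        exact_mod_cast ne_of_gt (hb _ hp).1
      · exact one_ne_zero
    have hwinv : (ω ((i : ℕ) + k - Nr))⁻¹ ≠ 0 := inv_ne_zero (by rw [hval]; exact hω _ hj2)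
    have hy : y ⟨(i : ℕ) + k - Nr, by omega⟩ = 0 := by
      rcases mul_eq_zero.mp this with h' | h'
      · exact absurd h' hc
      · rcases mul_eq_zero.mp h' with h'' | h''
        · exact absurd h'' hwinv
        · exact h''
    have : (⟨(i : ℕ) + k - Nr, by omega⟩ : Fin Nt) = j := Fin.ext hval
    rwa [this] at hy
  · intro h
    funext i
    by_cases hi : Nr - (r + s) ≤ (i : ℕ)
    · rw [key i hi, h _ (by simp only [Fin.val_mk]; omega) (by simp only [Fin.val_mk]; omega),
        mul_zero, mul_zero]
      rfl
    · rw [zeroRow i hi]; rfl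

end Aux
/-- Under the GSVD structure, `S_ba + S_n = ker H_ea`. -/
theorem S_ba_sup_S_n (Nt Nr Ne k r s : ℕ)
    (hNt : 0 < Nt) (hNr : 0 < Nr) (hNe : 0 < Ne)
    (hrsk : r + s ≤ k) (hkNt : k ≤ Nt) (hrsNr : r + s ≤ Nr) (hkrNe : k - r ≤ Ne)
    (Ua : Matrix (Fin Nt) (Fin Nt) ℂ) (Uba : Matrix (Fin Nr) (Fin Nr) ℂ)
    (Uea : Matrix (Fin Ne) (Fin Ne) ℂ)
    (hUa : Ua ∈ Matrix.unitaryGroup (Fin Nt) ℂ)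
    (hUba : Uba ∈ Matrix.unitaryGroup (Fin Nr) ℂ)
    (hUea : Uea ∈ Matrix.unitaryGroup (Fin Ne) ℂ)
    (ω : ℕ → ℂ) (hω : ∀ i < k, ω i ≠ 0)
    (b e : ℕ → ℝ)
    (hb : ∀ p < s, 0 < b p ∧ b p < 1) (he : ∀ p < s, 0 < e p ∧ e p < 1)
    (hbe : ∀ p < s, b p ^ 2 + e p ^ 2 = 1)
    (Hba : Matrix (Fin Nr) (Fin Nt) ℂ) (Hea : Matrix (Fin Ne) (Fin Nt) ℂ)
    (hHba : Hba = Uba * SigmaBa Nr k r s b * OmegaInvZero k Nt ω * Uaᴴ)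
    (hHea : Hea = Uea * SigmaEa Ne k r s e * OmegaInvZero k Nt ω * Uaᴴ) :
    ((LinearMap.ker (Matrix.toEuclideanLin Hba))ᗮ ⊓ LinearMap.ker (Matrix.toEuclideanLin Hea)) ⊔ (LinearMap.ker (Matrix.toEuclideanLin Hba) ⊓ LinearMap.ker (Matrix.toEuclideanLin Hea)) = LinearMap.ker (Matrix.toEuclideanLin Hea) := by
  subst hHba hHea
  have hUa1 : Uaᴴ * Ua = 1 := by simpa [Matrix.star_eq_conjTranspose] using hUa.1
  have hUa2 : Ua * Uaᴴ = 1 := by simpa [Matrix.star_eq_conjTranspose] using hUa.2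
  have hkerBa : ∀ x : EuclideanSpace ℂ (Fin Nt),
      x ∈ LinearMap.ker (Matrix.toEuclideanLin
          (Uba * SigmaBa Nr k r s b * OmegaInvZero k Nt ω * Uaᴴ)) ↔
      ∀ j : Fin Nt, k - (r + s) ≤ (j : ℕ) → (j : ℕ) < k →
        (Uaᴴ *ᵥ (WithLp.equiv 2 (Fin Nt → ℂ) x)) j = 0 := by
    intro x
    have h0 : Matrix.toEuclideanLin (Uba * SigmaBa Nr k r s b * OmegaInvZero k Nt ω * Uaᴴ) x
        = (WithLp.equiv 2 (Fin Nr → ℂ)).symm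
          (Uba *ᵥ (SigmaBa Nr k r s b *ᵥ (OmegaInvZero k Nt ω *ᵥ
            (Uaᴴ *ᵥ (WithLp.equiv 2 (Fin Nt → ℂ) x))))) := by
      rw [Matrix.toEuclideanLin_apply]
      congr 1
      simp only [← Matrix.mulVec_mulVec]
      rfl
    rw [LinearMap.mem_ker, h0, Equiv.symm_apply_eq,
      (show WithLp.equiv 2 (Fin Nr → ℂ) 0 = 0 from rfl)]
    rw [unitary_mulVec_eq_zero_iff hUba]
    exact sigmaBa_omega_mulVec_eq_zero hrsk hkNt hrsNr ω hω b hb _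
  have hkerEa : ∀ x : EuclideanSpace ℂ (Fin Nt),
      x ∈ LinearMap.ker (Matrix.toEuclideanLin
          (Uea * SigmaEa Ne k r s e * OmegaInvZero k Nt ω * Uaᴴ)) ↔
      ∀ j : Fin Nt, (j : ℕ) < k - r →
        (Uaᴴ *ᵥ (WithLp.equiv 2 (Fin Nt → ℂ) x)) j = 0 := by
    intro x
    have h0 : Matrix.toEuclideanLin (Uea * SigmaEa Ne k r s e * OmegaInvZero k Nt ω * Uaᴴ) x
        = (WithLp.equiv 2 (Fin Ne → ℂ)).symm
          (Uea *ᵥ (SigmaEa Ne k r s e *ᵥ (OmegaInvZero k Nt ω *ᵥ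
            (Uaᴴ *ᵥ (WithLp.equiv 2 (Fin Nt → ℂ) x))))) := by
      rw [Matrix.toEuclideanLin_apply]
      congr 1
      simp only [← Matrix.mulVec_mulVec]
      rfl
    rw [LinearMap.mem_ker, h0, Equiv.symm_apply_eq,
      (show WithLp.equiv 2 (Fin Ne → ℂ) 0 = 0 from rfl)]
    rw [unitary_mulVec_eq_zero_iff hUea]
    exact sigmaEa_omega_mulVec_eq_zero hrsk hkNt hkrNe ω hω e he _
  apply le_antisymm
  · exact sup_le inf_le_right inf_le_right
  · intro x hx
    have hy := (hkerEa x).mp hx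
    set u : Fin Nt → ℂ := fun j =>
      if k - r ≤ (j : ℕ) ∧ (j : ℕ) < k
        then (Uaᴴ *ᵥ (WithLp.equiv 2 (Fin Nt → ℂ) x)) j else 0 with hudef
    set v : Fin Nt → ℂ := fun j =>
      if k - r ≤ (j : ℕ) ∧ (j : ℕ) < k
        then 0 else (Uaᴴ *ᵥ (WithLp.equiv 2 (Fin Nt → ℂ) x)) j with hvdef
    have huv : u + v = Uaᴴ *ᵥ (WithLp.equiv 2 (Fin Nt → ℂ) x) := by
      funext j
      simp only [Pi.add_apply, hudef, hvdef]
      by_cases hj : k - r ≤ (j : ℕ) ∧ (j : ℕ) < k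
      · rw [if_pos hj, if_pos hj, add_zero]
      · rw [if_neg hj, if_neg hj, zero_add]
    have huu : Uaᴴ *ᵥ (Ua *ᵥ u) = u := by
      rw [Matrix.mulVec_mulVec, hUa1, Matrix.one_mulVec]
    have hvv : Uaᴴ *ᵥ (Ua *ᵥ v) = v := by
      rw [Matrix.mulVec_mulVec, hUa1, Matrix.one_mulVec]
    rw [Submodule.mem_sup]
    refine ⟨(WithLp.equiv 2 (Fin Nt → ℂ)).symm (Ua *ᵥ u), ?_,
      (WithLp.equiv 2 (Fin Nt → ℂ)).symm (Ua *ᵥ v), ?_, ?_⟩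
    · rw [Submodule.mem_inf]
      constructor
      · rw [Submodule.mem_orthogonal]
        intro z hz
        have hzc := (hkerBa z).mp hz
        have h0 : star (Uaᴴ *ᵥ (WithLp.equiv 2 (Fin Nt → ℂ) z)) ⬝ᵥ u = 0 := by
          apply Finset.sum_eq_zero
          intro j _
          by_cases hj : k - r ≤ (j : ℕ) ∧ (j : ℕ) < k
          · have hz0 := hzc j (by omega) hj.2
            simp only [Pi.star_apply, hz0, star_zero, zero_mul]
          · simp only [hudef]
            rw [if_neg hj, mul_zero]
        calc (inner ℂ z ((WithLp.equiv 2 (Fin Nt → ℂ)).symm (Ua *ᵥ u)) : ℂ)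
            = star (WithLp.equiv 2 (Fin Nt → ℂ) z) ⬝ᵥ (Ua *ᵥ u) := by
              simp [PiLp.inner_apply, dotProduct, RCLike.inner_apply, mul_comm]
          _ = (star (WithLp.equiv 2 (Fin Nt → ℂ) z) ᵥ* Ua) ⬝ᵥ u :=
              Matrix.dotProduct_mulVec _ _ _
          _ = star (Uaᴴ *ᵥ (WithLp.equiv 2 (Fin Nt → ℂ) z)) ⬝ᵥ u := by
              rw [Matrix.star_mulVec, Matrix.conjTranspose_conjTranspose]
          _ = 0 := h0
      · rw [hkerEa]
        intro j hj
        simp only [Equiv.apply_symm_apply]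
        rw [huu]
        have hcond : ¬ (k - r ≤ (j : ℕ) ∧ (j : ℕ) < k) := by omega
        simp only [hudef]
        exact if_neg hcond
    · rw [Submodule.mem_inf]
      refine ⟨(hkerBa _).mpr ?_, (hkerEa _).mpr ?_⟩
      · intro j hj1 hj2
        simp only [Equiv.apply_symm_apply]
        rw [hvv]
        by_cases hj : k - r ≤ (j : ℕ) ∧ (j : ℕ) < k
        · simp only [hvdef]
          exact if_pos hj
        · have hjlt : (j : ℕ) < k - r := by omega
          simp only [hvdef]
          rw [if_neg hj]
          exact hy j hjlt
      · intro j hj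
        simp only [Equiv.apply_symm_apply]
        rw [hvv]
        have hcond : ¬ (k - r ≤ (j : ℕ) ∧ (j : ℕ) < k) := by omega
        simp only [hvdef]
        rw [if_neg hcond]
        exact hy j hj
    · have hsum : Ua *ᵥ u + Ua *ᵥ v = WithLp.equiv 2 (Fin Nt → ℂ) x := by
        rw [← Matrix.mulVec_add, huv, Matrix.mulVec_mulVec, hUa2, Matrix.one_mulVec]
      rw [show ∀ a c : Fin Nt → ℂ, (WithLp.equiv 2 (Fin Nt → ℂ)).symm a + (WithLp.equiv 2 (Fin Nt → ℂ)).symm c = (WithLp.equiv 2 (Fin Nt → ℂ)).symm (a + c) from fun _ _ => rfl, hsum, Equiv.symm_apply_apply]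
end

section
/- Under the GSVD structure, if the diagonal power allocation matrix P = diag(p_1,…,p_{N_t}) with p_i ≥ 0 satisfies p_i = 0 for every index i ∉ {k−r+1, …, k}, then the eavesdropper's effective channel vanishes: H_ea U_a A P^{1/2} V = 0 for every matrix V ∈ ℂ^{N_t×N_t}. -/
open Matrix

lemma key_vanish (Nt Ne k r s : ℕ) (e : ℕ → ℝ) (ω : ℕ → ℂ) (p : ℕ → ℝ)
    (hpzero : ∀ i < Nt, ¬(k - r ≤ i ∧ i < k) → p i = 0) :
    SigmaEa Ne k r s e * OmegaInvZero k Nt ω * Amat Nt k ω *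
      (Matrix.diagonal fun i : Fin Nt => ((Real.sqrt (p (i : ℕ)) : ℝ) : ℂ)) = 0 := by
  ext i j
  rw [Matrix.mul_diagonal]
  by_cases hj : (j : ℕ) < k - r
  · have hpj : p (j : ℕ) = 0 := hpzero j j.2 (by omega)
    simp [hpj]
  · have hM : (SigmaEa Ne k r s e * OmegaInvZero k Nt ω * Amat Nt k ω) i j = 0 := by
      rw [Matrix.mul_apply]
      apply Finset.sum_eq_zero
      intro x _
      rw [Matrix.mul_apply, Finset.sum_mul]
      have hin : ∀ l : Fin k, SigmaEa Ne k r s e i l * OmegaInvZero k Nt ω l x *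
          Amat Nt k ω x j = 0 := by
        intro l
        by_cases h1 : (i : ℕ) = (l : ℕ) ∧ (i : ℕ) < k - r
        · by_cases h2 : (x : ℕ) = (l : ℕ)
          · have h3 : ¬((x : ℕ) = (j : ℕ) ∧ (x : ℕ) < k) := by omega
            simp [Amat, h3]
          · simp [OmegaInvZero, h2]
        · simp [SigmaEa, h1]
      exact Finset.sum_eq_zero fun l _ => by simpa [mul_assoc] using hin l
    rw [hM, zero_mul]
    rfl

/-- Under the GSVD structure, if the power allocation `P = diag(p_1,…,p_{N_t})`, `p_i ≥ 0`, satisfies `p_i = 0` for every index outside `{k−r+1, …, k}` (1-indexed), then `H_ea U_a A P^{1/2} V = 0` for every matrix `V`. -/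
theorem eve_effective_channel_vanishes (Nt Nr Ne k r s : ℕ)
    (hNt : 0 < Nt) (hNr : 0 < Nr) (hNe : 0 < Ne)
    (hrsk : r + s ≤ k) (hkNt : k ≤ Nt) (hrsNr : r + s ≤ Nr) (hkrNe : k - r ≤ Ne)
    (Ua : Matrix (Fin Nt) (Fin Nt) ℂ) (Uba : Matrix (Fin Nr) (Fin Nr) ℂ)
    (Uea : Matrix (Fin Ne) (Fin Ne) ℂ)
    (hUa : Ua ∈ Matrix.unitaryGroup (Fin Nt) ℂ)
    (hUba : Uba ∈ Matrix.unitaryGroup (Fin Nr) ℂ)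
    (hUea : Uea ∈ Matrix.unitaryGroup (Fin Ne) ℂ)
    (ω : ℕ → ℂ) (hω : ∀ i < k, ω i ≠ 0)
    (b e : ℕ → ℝ)
    (hb : ∀ p < s, 0 < b p ∧ b p < 1) (he : ∀ p < s, 0 < e p ∧ e p < 1)
    (hbe : ∀ p < s, b p ^ 2 + e p ^ 2 = 1)
    (Hba : Matrix (Fin Nr) (Fin Nt) ℂ) (Hea : Matrix (Fin Ne) (Fin Nt) ℂ)
    (hHba : Hba = Uba * SigmaBa Nr k r s b * OmegaInvZero k Nt ω * Uaᴴ)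
    (hHea : Hea = Uea * SigmaEa Ne k r s e * OmegaInvZero k Nt ω * Uaᴴ)
    (p : ℕ → ℝ) (hp : ∀ i < Nt, 0 ≤ p i)
    (hpzero : ∀ i < Nt, ¬(k - r ≤ i ∧ i < k) → p i = 0)
    (Psqrt : Matrix (Fin Nt) (Fin Nt) ℂ)
    (hPsqrt : Psqrt = Matrix.diagonal fun i : Fin Nt => ((Real.sqrt (p (i : ℕ)) : ℝ) : ℂ)) :
    ∀ V : Matrix (Fin Nt) (Fin Nt) ℂ, Hea * Ua * Amat Nt k ω * Psqrt * V = 0 := by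
  intro V
  subst hHea hPsqrt
  have hU : Uaᴴ * Ua = 1 := by
    have := hUa.1
    rwa [Matrix.star_eq_conjTranspose] at this
  have hkey := key_vanish Nt Ne k r s e ω p hpzero
  set S := SigmaEa Ne k r s e
  set O := OmegaInvZero k Nt ω
  set A := Amat Nt k ω
  set D := (Matrix.diagonal fun i : Fin Nt => ((Real.sqrt (p (i : ℕ)) : ℝ) : ℂ))
  simp only [Matrix.mul_assoc]
  rw [← Matrix.mul_assoc Uaᴴ Ua, hU, Matrix.one_mul]
  have h0 : S * (O * (A * (D * V))) = 0 := by
    calc S * (O * (A * (D * V))) = S * O * A * D * V := by simp only [Matrix.mul_assoc]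
      _ = 0 := by rw [hkey, Matrix.zero_mul]
  rw [h0, Matrix.mul_zero]
end
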